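/- arXiv:1908.07830 — 7 statements merged into one kernel-verified Lean document; each statement's English description precedes it below -/
import Mathlib

section
/- Let A be a nonnegative random variable whose law has density a on (0,∞), and let (U,V) be a random vector, independent of A, taking values in (0,∞)² and whose law has a density f with respect to two-dimensional Lebesgue measure. If A·U + V has the same distribution as A, then for Lebesgue-almost every r > 0: a(r) = ∫₀^∞ (a(s)/s) · ( ∫₀^r f((r−v)/s, v) dv ) ds. -/
open MeasureTheory ProbabilityTheory Filter
open scoped ENNReal

lemma aux_map_eq_withDensity {α : Type*} [MeasurableSpace α] {ν μ : Measure α}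
    {g : α → ℝ} {S : Set α} (hS : MeasurableSet S) (hg0 : ∀ x, 0 ≤ g x)
    (hint : IntegrableOn g S ν)
    (h : ∀ B, MeasurableSet B → μ B = ENNReal.ofReal (∫ x in B ∩ S, g x ∂ν)) :
    μ = ν.withDensity (S.indicator fun x => ENNReal.ofReal (g x)) := by
  ext B hB
  rw [withDensity_apply _ hB, h B hB,
    ofReal_integral_eq_lintegral_ofReal (hint.mono_set Set.inter_subset_right)
      (Filter.Eventually.of_forall fun x => hg0 x),
    lintegral_indicator hS, Measure.restrict_restrict hS, Set.inter_comm]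

lemma aux_lintegral_mul_add {s : ℝ} (hs : s ≠ 0) (v : ℝ) {h : ℝ → ℝ≥0∞} (hh : Measurable h) :
    ∫⁻ u, h (s * u + v) = ENNReal.ofReal (|s⁻¹|) * ∫⁻ r, h r := by
  have h1 : Measure.map (fun u : ℝ => s * u + v) volume
      = ENNReal.ofReal (|s⁻¹|) • volume := by
    have e : (fun u : ℝ => s * u + v) = (fun x => x + v) ∘ (fun u => s * u) := rfl
    rw [e, ← Measure.map_map (measurable_add_const v) (measurable_const_mul s),
      show (fun u : ℝ => s * u) = (s * ·) from rfl, Real.map_volume_mul_left hs,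
      Measure.map_smul, map_add_right_eq_self volume v]
  calc ∫⁻ u, h (s * u + v)
      = ∫⁻ r, h r ∂(Measure.map (fun u : ℝ => s * u + v) volume) :=
        (lintegral_map hh (by fun_prop)).symm
    _ = _ := by rw [h1, lintegral_smul_measure, smul_eq_mul]

set_option maxHeartbeats 2000000 in
/-- If `A` has density `a` on `(0,∞)`, `(U,V)` is independent of `A` with a
density `f` on `(0,∞)²`, and `A·U + V =ᵈ A`, then for Lebesgue-a.e. `r > 0`,
`a(r) = ∫₀^∞ (a(s)/s) (∫₀^r f((r−v)/s, v) dv) ds`. -/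
theorem stmt_3 {Ω : Type*} [MeasurableSpace Ω] (P : Measure Ω) [IsProbabilityMeasure P]
    (A U V : Ω → ℝ) (hA : Measurable A) (hU : Measurable U) (hV : Measurable V)
    (hAnn : ∀ᵐ ω ∂P, 0 ≤ A ω)
    (hUVpos : ∀ᵐ ω ∂P, 0 < U ω ∧ 0 < V ω)
    (hindep : IndepFun A (fun ω => (U ω, V ω)) P)
    (a : ℝ → ℝ) (ha_meas : Measurable a) (ha_nn : ∀ r, 0 ≤ a r)
    (ha_dens : ∀ B : Set ℝ, MeasurableSet B →
      Measure.map A P B = ENNReal.ofReal (∫ r in B ∩ Set.Ioi 0, a r))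
    (f : ℝ × ℝ → ℝ) (hf_meas : Measurable f) (hf_nn : ∀ p, 0 ≤ f p)
    (hf_dens : ∀ B : Set (ℝ × ℝ), MeasurableSet B →
      Measure.map (fun ω => (U ω, V ω)) P B =
        ENNReal.ofReal (∫ p in B ∩ Set.Ioi 0 ×ˢ Set.Ioi 0, f p))
    (hfix : Measure.map (fun ω => A ω * U ω + V ω) P = Measure.map A P) :
    ∀ᵐ r ∂(volume.restrict (Set.Ioi (0 : ℝ))),
      a r = ∫ s in Set.Ioi (0 : ℝ), (a s / s) * ∫ v in (0 : ℝ)..r, f ((r - v) / s, v) := by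
  have hUV : Measurable fun ω => (U ω, V ω) := hU.prodMk hV
  have hPA : IsProbabilityMeasure (Measure.map A P) := Measure.isProbabilityMeasure_map hA.aemeasurable
  have hPW : IsProbabilityMeasure (Measure.map (fun ω => (U ω, V ω)) P) :=
    Measure.isProbabilityMeasure_map hUV.aemeasurable
  set ga : ℝ → ℝ≥0∞ := (Set.Ioi (0:ℝ)).indicator fun r => ENNReal.ofReal (a r) with hga_def
  set gf : ℝ × ℝ → ℝ≥0∞ :=
    (Set.Ioi (0:ℝ) ×ˢ Set.Ioi (0:ℝ)).indicator fun p => ENNReal.ofReal (f p) with hgf_def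
  have hga_meas : Measurable ga := (ha_meas.ennreal_ofReal).indicator measurableSet_Ioi
  have hgf_meas : Measurable gf :=
    (hf_meas.ennreal_ofReal).indicator (measurableSet_Ioi.prod measurableSet_Ioi)
  have hint_a : IntegrableOn a (Set.Ioi (0:ℝ)) := by
    by_contra hcon
    have h1 := ha_dens Set.univ MeasurableSet.univ
    rw [Set.univ_inter, integral_undef hcon] at h1
    have h2 : Measure.map A P Set.univ = 1 := measure_univ
    rw [h2] at h1
    simp at h1
  have hint_f : IntegrableOn f (Set.Ioi (0:ℝ) ×ˢ Set.Ioi (0:ℝ)) := by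
    by_contra hcon
    have h1 := hf_dens Set.univ MeasurableSet.univ
    rw [Set.univ_inter, integral_undef hcon] at h1
    have h2 : Measure.map (fun ω => (U ω, V ω)) P Set.univ = 1 := measure_univ
    rw [h2] at h1
    simp at h1
  have hμA : Measure.map A P = volume.withDensity ga :=
    aux_map_eq_withDensity measurableSet_Ioi ha_nn hint_a ha_dens
  have hμW : Measure.map (fun ω => (U ω, V ω)) P = volume.withDensity gf :=
    aux_map_eq_withDensity (measurableSet_Ioi.prod measurableSet_Ioi) hf_nn hint_f hf_dens
  have hga_int : ∫⁻ x, ga x = 1 := by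
    have h1 : volume.withDensity ga Set.univ = 1 := by
      rw [← hμA]; exact measure_univ
    rwa [withDensity_apply _ MeasurableSet.univ, Measure.restrict_univ] at h1
  have hjoint : Measure.map (fun ω => (A ω, (U ω, V ω))) P
      = (Measure.map A P).prod (Measure.map (fun ω => (U ω, V ω)) P) :=
    (indepFun_iff_map_prod_eq_prod_map_map hA.aemeasurable hUV.aemeasurable).mp hindep
  set T : ℝ × ℝ × ℝ → ℝ≥0∞ := fun q => gf ((q.2.1 - q.2.2) / q.1, q.2.2) with hT_def
  have hT_meas : Measurable T := hgf_meas.comp (by fun_prop)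
  set G : ℝ → ℝ≥0∞ := fun r =>
    ∫⁻ s, ga s * (ENNReal.ofReal (|s⁻¹|) * ∫⁻ v, T (s, r, v)) with hG_def
  have hIT1 : Measurable fun q : ℝ × ℝ => ∫⁻ v, T (q.1, q.2, v) :=
    Measurable.lintegral_prod_right'
      (f := fun z : (ℝ × ℝ) × ℝ => T (z.1.1, z.1.2, z.2)) (hT_meas.comp (by fun_prop))
  have hKmeas : Measurable fun q : ℝ × ℝ =>
      ga q.1 * (ENNReal.ofReal (|q.1⁻¹|) * ∫⁻ v, T (q.1, q.2, v)) :=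
    (hga_meas.comp measurable_fst).mul
      ((((measurable_fst.inv).abs).ennreal_ofReal).mul hIT1)
  have hG_meas : Measurable G :=
    Measurable.lintegral_prod_right'
      (f := fun z : ℝ × ℝ => ga z.2 * (ENNReal.ofReal (|z.2⁻¹|) * ∫⁻ v, T (z.2, z.1, v)))
      (hKmeas.comp measurable_swap)
  -- the key identity
  have key : ∀ B : Set ℝ, MeasurableSet B → Measure.map A P B = ∫⁻ r in B, G r := by
    intro B hB
    set χ : ℝ → ℝ≥0∞ := B.indicator 1 with hχ_def
    have hχ_meas : Measurable χ := measurable_one.indicator hB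
    have hφ : Measurable fun p : ℝ × (ℝ × ℝ) => p.1 * p.2.1 + p.2.2 := by fun_prop
    have step1 : Measure.map A P B
        = ∫⁻ p : ℝ × (ℝ × ℝ), χ (p.1 * p.2.1 + p.2.2)
            ∂((volume.withDensity ga).prod (volume.withDensity gf)) := by
      rw [← hfix]
      have e : (fun ω => A ω * U ω + V ω)
          = (fun p : ℝ × (ℝ × ℝ) => p.1 * p.2.1 + p.2.2) ∘ (fun ω => (A ω, (U ω, V ω))) := rfl
      rw [e, ← Measure.map_map hφ (hA.prodMk hUV), hjoint, hμA, hμW,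
        Measure.map_apply hφ hB, ← lintegral_indicator_one (hφ hB)]
      refine lintegral_congr fun p => ?_
      by_cases hp : p.1 * p.2.1 + p.2.2 ∈ B
      · simp [hχ_def, Set.indicator_of_mem, hp, Set.mem_preimage]
      · simp [hχ_def, Set.indicator_of_notMem, hp, Set.mem_preimage]
    have inner_eq : ∀ s : ℝ, 0 < s →
        (∫⁻ w : ℝ × ℝ, gf w * χ (s * w.1 + w.2))
          = ENNReal.ofReal (|s⁻¹|) * ∫⁻ r, χ r * ∫⁻ v, T (s, r, v) := by
      intro s hs
      have hsn : s ≠ 0 := ne_of_gt hs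
      have hmeas1 : ∀ v : ℝ, Measurable fun r : ℝ => gf ((r - v) / s, v) * χ r := fun v =>
        (hgf_meas.comp (by fun_prop)).mul hχ_meas
      calc (∫⁻ w : ℝ × ℝ, gf w * χ (s * w.1 + w.2))
          = ∫⁻ v, ∫⁻ u, gf (u, v) * χ (s * u + v) := by
            rw [Measure.volume_eq_prod]
            exact lintegral_prod_symm' _ (hgf_meas.mul (hχ_meas.comp (by fun_prop)))
        _ = ∫⁻ v, ENNReal.ofReal (|s⁻¹|) * ∫⁻ r, gf ((r - v) / s, v) * χ r := by
            refine lintegral_congr fun v => ?_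
            rw [← aux_lintegral_mul_add hsn v (hmeas1 v)]
            refine lintegral_congr fun u => ?_
            rw [add_sub_cancel_right, mul_div_cancel_left₀ _ hsn]
        _ = ENNReal.ofReal (|s⁻¹|) * ∫⁻ v, ∫⁻ r, gf ((r - v) / s, v) * χ r :=
            lintegral_const_mul _
              (Measurable.lintegral_prod_right'
                (f := fun z : ℝ × ℝ => gf ((z.2 - z.1) / s, z.1) * χ z.2)
                ((hgf_meas.comp (by fun_prop)).mul (hχ_meas.comp measurable_snd)))
        _ = ENNReal.ofReal (|s⁻¹|) * ∫⁻ r, ∫⁻ v, gf ((r - v) / s, v) * χ r := by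
            rw [lintegral_lintegral_swap
              (((hgf_meas.comp (by fun_prop)).mul (hχ_meas.comp measurable_snd)).aemeasurable)]
        _ = ENNReal.ofReal (|s⁻¹|) * ∫⁻ r, χ r * ∫⁻ v, T (s, r, v) := by
            congr 1
            refine lintegral_congr fun r => ?_
            have hg1 : Measurable fun v : ℝ => gf ((r - v) / s, v) :=
              hgf_meas.comp (by fun_prop)
            rw [lintegral_mul_const _ hg1, mul_comm]
    have houter_meas : Measurable fun s : ℝ => ∫⁻ w : ℝ × ℝ, gf w * χ (s * w.1 + w.2) :=
      Measurable.lintegral_prod_right'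
        (f := fun z : ℝ × (ℝ × ℝ) => gf z.2 * χ (z.1 * z.2.1 + z.2.2))
        ((hgf_meas.comp measurable_snd).mul (hχ_meas.comp hφ))
    have step3 : Measure.map A P B
        = ∫⁻ s, ga s * (ENNReal.ofReal (|s⁻¹|) * ∫⁻ r, χ r * ∫⁻ v, T (s, r, v)) := by
      rw [step1]
      calc (∫⁻ p : ℝ × (ℝ × ℝ), χ (p.1 * p.2.1 + p.2.2)
              ∂((volume.withDensity ga).prod (volume.withDensity gf)))
          = ∫⁻ s, (∫⁻ w : ℝ × ℝ, χ (s * w.1 + w.2) ∂(volume.withDensity gf))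
              ∂(volume.withDensity ga) :=
            lintegral_prod _ ((hχ_meas.comp hφ).aemeasurable)
        _ = ∫⁻ s, (∫⁻ w : ℝ × ℝ, gf w * χ (s * w.1 + w.2)) ∂(volume.withDensity ga) :=
            lintegral_congr fun s =>
              lintegral_withDensity_eq_lintegral_mul _ hgf_meas (hχ_meas.comp (by fun_prop))
        _ = ∫⁻ s, ga s * ∫⁻ w : ℝ × ℝ, gf w * χ (s * w.1 + w.2) :=
            lintegral_withDensity_eq_lintegral_mul _ hga_meas houter_meas
        _ = ∫⁻ s, ga s * (ENNReal.ofReal (|s⁻¹|) * ∫⁻ r, χ r * ∫⁻ v, T (s, r, v)) := by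
            refine lintegral_congr fun s => ?_
            by_cases hs : (0:ℝ) < s
            · rw [inner_eq s hs]
            · have h0 : ga s = 0 := Set.indicator_of_notMem (by simpa using hs) _
              rw [h0, zero_mul, zero_mul]
    have hrin_meas : Measurable fun z : ℝ × ℝ =>
        χ z.2 * (ga z.1 * (ENNReal.ofReal (|z.1⁻¹|) * ∫⁻ v, T (z.1, z.2, v))) :=
      (hχ_meas.comp measurable_snd).mul hKmeas
    have step4 : (∫⁻ s, ga s * (ENNReal.ofReal (|s⁻¹|) * ∫⁻ r, χ r * ∫⁻ v, T (s, r, v)))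
        = ∫⁻ r, χ r * G r := by
      calc (∫⁻ s, ga s * (ENNReal.ofReal (|s⁻¹|) * ∫⁻ r, χ r * ∫⁻ v, T (s, r, v)))
          = ∫⁻ s, ∫⁻ r, χ r * (ga s * (ENNReal.ofReal (|s⁻¹|) * ∫⁻ v, T (s, r, v))) := by
            refine lintegral_congr fun s => ?_
            have hm1 : Measurable fun r : ℝ => χ r * ∫⁻ v, T (s, r, v) :=
              hχ_meas.mul (hIT1.comp measurable_prodMk_left)
            calc ga s * (ENNReal.ofReal (|s⁻¹|) * ∫⁻ r, χ r * ∫⁻ v, T (s, r, v))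
                = (ga s * ENNReal.ofReal (|s⁻¹|)) * ∫⁻ r, χ r * ∫⁻ v, T (s, r, v) := by
                  ring
              _ = ∫⁻ r, (ga s * ENNReal.ofReal (|s⁻¹|)) * (χ r * ∫⁻ v, T (s, r, v)) :=
                  (lintegral_const_mul _ hm1).symm
              _ = ∫⁻ r, χ r * (ga s * (ENNReal.ofReal (|s⁻¹|) * ∫⁻ v, T (s, r, v))) :=
                  lintegral_congr fun r => by ring
        _ = ∫⁻ r, ∫⁻ s, χ r * (ga s * (ENNReal.ofReal (|s⁻¹|) * ∫⁻ v, T (s, r, v))) := by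
            rw [lintegral_lintegral_swap hrin_meas.aemeasurable]
        _ = ∫⁻ r, χ r * G r := by
            refine lintegral_congr fun r => ?_
            have hm2 : Measurable fun s : ℝ =>
                ga s * (ENNReal.ofReal (|s⁻¹|) * ∫⁻ v, T (s, r, v)) :=
              hKmeas.comp (measurable_id.prodMk measurable_const)
            rw [lintegral_const_mul _ hm2]
    rw [step3, step4, ← lintegral_indicator hB]
    refine lintegral_congr fun r => ?_
    by_cases h : r ∈ B
    · simp [hχ_def, Set.indicator_of_mem, h]
    · simp [hχ_def, Set.indicator_of_notMem, h]
  -- conclude density equality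
  have hWD : volume.withDensity ga = volume.withDensity G := by
    ext B hB
    rw [withDensity_apply _ hB, withDensity_apply _ hB]
    have h1 := key B hB
    rw [hμA, withDensity_apply _ hB] at h1
    exact h1
  have hae : ga =ᵐ[volume] G :=
    (withDensity_eq_iff hga_meas.aemeasurable hG_meas.aemeasurable
      (by rw [hga_int]; exact ENNReal.one_ne_top)).mp hWD
  have hae' : ∀ᵐ r ∂(volume.restrict (Set.Ioi (0:ℝ))), ENNReal.ofReal (a r) = G r := by
    filter_upwards [ae_restrict_of_ae hae, ae_restrict_mem measurableSet_Ioi] with r h1 h2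
    rw [← h1, hga_def]
    exact (Set.indicator_of_mem h2 fun r => ENNReal.ofReal (a r)).symm
  filter_upwards [hae', ae_restrict_mem measurableSet_Ioi] with r hGr hr
  -- final conversion from lintegrals to integrals
  set K : ℝ → ℝ≥0∞ := fun s =>
    ENNReal.ofReal (a s) * (ENNReal.ofReal (|s⁻¹|) * ∫⁻ v, T (s, r, v)) with hK_def
  have hK_meas : Measurable K :=
    (ha_meas.ennreal_ofReal).mul
      ((((measurable_id.inv).abs).ennreal_ofReal).mul
        (hIT1.comp (measurable_id.prodMk measurable_const)))
  have hGrepr : G r = ∫⁻ s in Set.Ioi (0:ℝ), K s := by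
    rw [hG_def, ← lintegral_indicator measurableSet_Ioi]
    refine lintegral_congr fun s => ?_
    by_cases hs : s ∈ Set.Ioi (0:ℝ)
    · rw [Set.indicator_of_mem hs, hK_def, hga_def, Set.indicator_of_mem hs]
    · rw [Set.indicator_of_notMem hs, hga_def, Set.indicator_of_notMem hs, zero_mul]
  have hfin : (∫⁻ s in Set.Ioi (0:ℝ), K s) ≠ ⊤ := by
    rw [← hGrepr, ← hGr]; exact ENNReal.ofReal_ne_top
  have haelt : ∀ᵐ s ∂(volume.restrict (Set.Ioi (0:ℝ))), K s < ⊤ :=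
    ae_lt_top' hK_meas.aemeasurable hfin
  have main : ∫ s in Set.Ioi (0:ℝ), (a s / s) * ∫ v in (0:ℝ)..r, f ((r - v) / s, v)
      = (G r).toReal := by
    rw [hGrepr, ← integral_toReal hK_meas.aemeasurable haelt]
    refine setIntegral_congr_fun measurableSet_Ioi fun s hs => ?_
    have hs0 : (0:ℝ) < s := hs
    have habs : |s⁻¹| = s⁻¹ := abs_of_nonneg (inv_nonneg.mpr hs0.le)
    have hTrepr : (∫⁻ v, T (s, r, v))
        = ∫⁻ v in Set.Ioo 0 r, ENNReal.ofReal (f ((r - v) / s, v)) := by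
      rw [← lintegral_indicator measurableSet_Ioo]
      refine lintegral_congr fun v => ?_
      by_cases hv : v ∈ Set.Ioo (0:ℝ) r
      · rw [hT_def]
        simp only []
        rw [hgf_def, Set.indicator_of_mem, Set.indicator_of_mem hv]
        exact ⟨div_pos (sub_pos.mpr hv.2) hs0, hv.1⟩
      · rw [hT_def]
        simp only []
        rw [hgf_def, Set.indicator_of_notMem, Set.indicator_of_notMem hv]
        intro hmem
        refine hv ⟨hmem.2, ?_⟩
        have h1 : 0 < ((r - v) / s) * s := mul_pos hmem.1 hs0
        rw [div_mul_cancel₀ _ (ne_of_gt hs0)] at h1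
        exact sub_pos.mp h1
    have hIv : ∫ v in (0:ℝ)..r, f ((r - v) / s, v) = (∫⁻ v, T (s, r, v)).toReal := by
      rw [hTrepr, intervalIntegral.integral_of_le (le_of_lt hr),
        integral_Ioc_eq_integral_Ioo,
        integral_eq_lintegral_of_nonneg_ae (Filter.Eventually.of_forall fun v => hf_nn _)
          (Measurable.aestronglyMeasurable (by fun_prop))]
    rw [hK_def]
    simp only []
    rw [ENNReal.toReal_mul, ENNReal.toReal_mul, ENNReal.toReal_ofReal (ha_nn s),
      ENNReal.toReal_ofReal (abs_nonneg _), habs, hIv, div_eq_mul_inv, mul_assoc]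
  rw [main, ← hGr, ENNReal.toReal_ofReal (ha_nn r)]
end

section
/- Let X be a nonnegative integrable random variable such that P(X > r) ~ c·r^{-q} as r → ∞, for some constants c > 0 and q > 1. Then E[X · 1_{X > r}] ~ c·(q/(q−1))·r^{1−q} as r → ∞. -/
open MeasureTheory Filter Asymptotics Set

/-- If `X ≥ 0` is integrable with `P(X > r) ~ c·r^{-q}` as `r → ∞` for some
`c > 0`, `q > 1`, then `E[X·1_{X>r}] ~ c·(q/(q−1))·r^{1−q}` as `r → ∞`. -/
theorem stmt_4 {Ω : Type*} [MeasurableSpace Ω] (P : Measure Ω) [IsProbabilityMeasure P]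
    (X : Ω → ℝ) (hX : Measurable X) (hXnn : ∀ᵐ ω ∂P, 0 ≤ X ω) (hXint : Integrable X P)
    (c q : ℝ) (hc : 0 < c) (hq : 1 < q)
    (htail : (fun r : ℝ => (P {ω | r < X ω}).toReal) ~[atTop] fun r : ℝ => c * r ^ (-q)) :
    (fun r : ℝ => ∫ ω in {ω | r < X ω}, X ω ∂P) ~[atTop]
      fun r : ℝ => c * (q / (q - 1)) * r ^ (1 - q) := by
  have hq1 : (0:ℝ) < q - 1 := by linarith
  set G : ℝ → ℝ := fun r => (P {ω | r < X ω}).toReal with hGdef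
  have hGanti : Antitone G := fun r s hrs =>
    ENNReal.toReal_mono (measure_ne_top P _)
      (measure_mono fun ω h => lt_of_le_of_lt hrs h)
  have hGnn : ∀ r, 0 ≤ G r := fun r => ENNReal.toReal_nonneg
  have hlo := htail.isLittleO
  -- eventual upper bound with factor 2
  have hub : ∀ᶠ t in atTop, G t ≤ 2 * (c * t ^ (-q)) := by
    filter_upwards [hlo.def one_pos, eventually_gt_atTop (0:ℝ)] with t h ht
    have hpos : 0 < c * t ^ (-q) := by positivity
    rw [Real.norm_eq_abs, Real.norm_eq_abs, abs_of_pos hpos, one_mul] at h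
    have h2 := (abs_le.mp h).2
    simp only [Pi.sub_apply] at h2
    linarith
  obtain ⟨T₀, hT₀⟩ := eventually_atTop.mp hub
  set T : ℝ := max T₀ 1 with hTdef
  have hTpos : (0:ℝ) < T := lt_of_lt_of_le one_pos (le_max_right _ _)
  have hGint : ∀ r, T ≤ r → IntegrableOn G (Ioi r) := by
    intro r hr
    have hrpos : 0 < r := lt_of_lt_of_le hTpos hr
    have hint : IntegrableOn (fun t : ℝ => 2 * (c * t ^ (-q))) (Ioi r) :=
      (((integrableOn_Ioi_rpow_of_lt (by linarith) hrpos).const_mul c).const_mul 2)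
    refine Integrable.mono' hint hGanti.measurable.aestronglyMeasurable.restrict ?_
    refine (ae_restrict_iff' measurableSet_Ioi).2 (ae_of_all _ fun t ht => ?_)
    rw [Real.norm_eq_abs, abs_of_nonneg (hGnn t)]
    exact hT₀ t (le_of_lt (lt_of_le_of_lt (le_trans (le_max_left _ _) hr) ht))
  -- layer cake representation
  have hF : ∀ r, T ≤ r →
      ∫ ω in {ω | r < X ω}, X ω ∂P = r * G r + ∫ t in Ioi r, G t := by
    intro r hr
    have hrpos : 0 < r := lt_of_lt_of_le hTpos hr
    have hS : MeasurableSet {ω | r < X ω} := hX measurableSet_Ioi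
    rw [(hXint.restrict (s := {ω | r < X ω})).integral_eq_integral_meas_lt
      (ae_restrict_of_ae hXnn)]
    have key : ∀ t : ℝ, ((P.restrict {ω | r < X ω}) {a | t < X a}).toReal = G (max t r) := by
      intro t
      rw [Measure.restrict_apply (show MeasurableSet {a | t < X a} from hX measurableSet_Ioi)]
      congr 2
      ext ω
      simp only [Set.mem_inter_iff, Set.mem_setOf_eq, max_lt_iff]
    simp_rw [measureReal_def, key]
    have hsplit : Ioi (0:ℝ) = Ioc 0 r ∪ Ioi r := (Ioc_union_Ioi_eq_Ioi hrpos.le).symm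
    have heq1 : EqOn (fun _ : ℝ => G r) (fun t => G (max t r)) (Ioc 0 r) := by
      intro t ht
      simp [max_eq_right ht.2]
    have heq2 : EqOn G (fun t => G (max t r)) (Ioi r) := by
      intro t ht
      simp [max_eq_left (le_of_lt (mem_Ioi.mp ht))]
    have hi1 : IntegrableOn (fun t => G (max t r)) (Ioc 0 r) :=
      (integrableOn_const measure_Ioc_lt_top.ne).congr_fun heq1 measurableSet_Ioc
    have hi2 : IntegrableOn (fun t => G (max t r)) (Ioi r) :=
      (hGint r hr).congr_fun heq2 measurableSet_Ioi
    rw [hsplit, setIntegral_union (Ioc_disjoint_Ioi le_rfl) measurableSet_Ioi hi1 hi2]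
    congr 1
    · rw [← setIntegral_congr_fun measurableSet_Ioc heq1, setIntegral_const]
      simp [Real.volume_Ioc, ENNReal.toReal_ofReal hrpos.le, hrpos.le]
    · rw [← setIntegral_congr_fun measurableSet_Ioi heq2]
  -- Step B : r * G r - c r^{1-q} = o(r^{1-q})
  have hB : (fun r : ℝ => r * G r - c * r ^ (1 - q)) =o[atTop] fun r : ℝ => r ^ (1 - q) := by
    have h1 := hlo.mul_isBigO (isBigO_refl (fun r : ℝ => r) atTop)
    have h2 : (fun r : ℝ => r * G r - c * r ^ (1 - q)) =o[atTop]
        fun r : ℝ => (c * r ^ (-q)) * r := by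
      refine h1.congr' ?_ EventuallyEq.rfl
      filter_upwards [eventually_gt_atTop (0:ℝ)] with r hr
      simp only [Pi.mul_apply, Pi.sub_apply]
      have hpow : r ^ (-q) * r = r ^ (1 - q) := by
        rw [show (1:ℝ) - q = -q + 1 by ring, Real.rpow_add hr, Real.rpow_one]
      rw [sub_mul, mul_assoc, hpow]; ring
    have h3 : (fun r : ℝ => (c * r ^ (-q)) * r) =ᶠ[atTop] fun r : ℝ => c * r ^ (1 - q) := by
      filter_upwards [eventually_gt_atTop (0:ℝ)] with r hr
      have hpow : r ^ (-q) * r = r ^ (1 - q) := by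
        rw [show (1:ℝ) - q = -q + 1 by ring, Real.rpow_add hr, Real.rpow_one]
      rw [mul_assoc, hpow]
    have h4 := h2.congr' EventuallyEq.rfl h3
    exact (isLittleO_const_mul_right_iff hc.ne').mp h4
  -- Step C : ∫_{Ioi r} G - c/(q-1) r^{1-q} = o(r^{1-q})
  have hintpow : ∀ r : ℝ, 0 < r → ∫ t in Ioi r, t ^ (-q) = r ^ (1 - q) / (q - 1) := by
    intro r hr
    rw [integral_Ioi_rpow_of_lt (by linarith) hr, show -q + 1 = 1 - q by ring]
    have hne : (1:ℝ) - q ≠ 0 := by linarith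
    field_simp
    ring
  have hC : (fun r : ℝ => (∫ t in Ioi r, G t) - c / (q - 1) * r ^ (1 - q)) =o[atTop]
      fun r : ℝ => r ^ (1 - q) := by
    rw [isLittleO_iff]
    intro ε hε
    have hδ : 0 < ε * (q - 1) / c := by positivity
    obtain ⟨T₁, hT₁⟩ := eventually_atTop.mp (hlo.def hδ)
    filter_upwards [eventually_ge_atTop T, eventually_ge_atTop T₁, eventually_gt_atTop (0:ℝ)]
      with r hrT hrT₁ hrpos
    set δ := ε * (q - 1) / c with hδdef
    -- pointwise bounds on Ioi r
    have hbd : ∀ t ∈ Ioi r, (1 - δ) * (c * t ^ (-q)) ≤ G t ∧ G t ≤ (1 + δ) * (c * t ^ (-q)) := by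
      intro t ht
      have htr : r < t := ht
      have htpos : 0 < t := lt_trans hrpos htr
      have h := hT₁ t (le_of_lt (lt_of_le_of_lt hrT₁ htr))
      rw [Real.norm_eq_abs, Real.norm_eq_abs, abs_of_pos (by positivity : 0 < c * t ^ (-q))] at h
      simp only [Pi.sub_apply] at h
      have h2 := abs_le.mp h
      constructor <;> nlinarith [h2.1, h2.2]
    have hint2 : IntegrableOn (fun t : ℝ => (1 + δ) * (c * t ^ (-q))) (Ioi r) :=
      (((integrableOn_Ioi_rpow_of_lt (by linarith) hrpos).const_mul c).const_mul (1 + δ))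
    have hint1 : IntegrableOn (fun t : ℝ => (1 - δ) * (c * t ^ (-q))) (Ioi r) :=
      (((integrableOn_Ioi_rpow_of_lt (by linarith) hrpos).const_mul c).const_mul (1 - δ))
    have hne : q - 1 ≠ 0 := ne_of_gt hq1
    have hδc : δ * c * (r ^ (1 - q) / (q - 1)) = ε * r ^ (1 - q) := by
      rw [hδdef]; field_simp
    have hup : ∫ t in Ioi r, G t ≤ c / (q - 1) * r ^ (1 - q) + ε * r ^ (1 - q) := by
      calc ∫ t in Ioi r, G t ≤ ∫ t in Ioi r, (1 + δ) * (c * t ^ (-q)) :=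
            setIntegral_mono_on (hGint r hrT) hint2 measurableSet_Ioi
              (fun t ht => (hbd t ht).2)
        _ = c / (q - 1) * r ^ (1 - q) + δ * c * (r ^ (1 - q) / (q - 1)) := by
            rw [integral_const_mul, integral_const_mul, hintpow r hrpos]; field_simp
        _ = c / (q - 1) * r ^ (1 - q) + ε * r ^ (1 - q) := by rw [hδc]
    have hdown : c / (q - 1) * r ^ (1 - q) - ε * r ^ (1 - q) ≤ ∫ t in Ioi r, G t := by
      calc c / (q - 1) * r ^ (1 - q) - ε * r ^ (1 - q)
            = c / (q - 1) * r ^ (1 - q) - δ * c * (r ^ (1 - q) / (q - 1)) := by rw [hδc]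
        _ = ∫ t in Ioi r, (1 - δ) * (c * t ^ (-q)) := by
            rw [integral_const_mul, integral_const_mul, hintpow r hrpos]; field_simp
        _ ≤ ∫ t in Ioi r, G t :=
            setIntegral_mono_on hint1 (hGint r hrT) measurableSet_Ioi
              (fun t ht => (hbd t ht).1)
    have hrpow : 0 < r ^ (1 - q) := Real.rpow_pos_of_pos hrpos _
    rw [Real.norm_eq_abs, Real.norm_eq_abs, abs_of_pos hrpow, abs_le]
    constructor <;> linarith
  -- combine
  have hsum : (fun r : ℝ => (∫ ω in {ω | r < X ω}, X ω ∂P) - c * (q / (q - 1)) * r ^ (1 - q))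
      =o[atTop] fun r : ℝ => r ^ (1 - q) := by
    have h := hB.add hC
    refine h.congr' ?_ EventuallyEq.rfl
    filter_upwards [eventually_ge_atTop T] with r hr
    rw [hF r hr]
    have : c * (q / (q - 1)) = c + c / (q - 1) := by field_simp; ring
    rw [this]; ring
  have : (fun r : ℝ => (∫ ω in {ω | r < X ω}, X ω ∂P) - c * (q / (q - 1)) * r ^ (1 - q))
      =o[atTop] fun r : ℝ => c * (q / (q - 1)) * r ^ (1 - q) := by
    rw [isLittleO_const_mul_right_iff]
    · exact hsum
    · positivity
  exact this
end

section
/- Let Y be a nonnegative random variable whose law has a continuous density g on (0,∞), and let b, c > 0. Assume that for every r > 0 and every ε > 0 one has P( e^{−εb}·r < Y ≤ r ) ≤ (e^{εc} − 1) · P(Y > r). Then b·r·g(r) ≤ c·P(Y > r) for every r > 0. -/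
open MeasureTheory Filter

/-- If `Y ≥ 0` has a continuous density `g` on `(0,∞)` and for all `r, ε > 0`
one has `P(e^{−εb}·r < Y ≤ r) ≤ (e^{εc} − 1)·P(Y > r)`, then `b·r·g(r) ≤ c·P(Y > r)` for all
`r > 0`. -/
theorem stmt_5 {Ω : Type*} [MeasurableSpace Ω] (P : Measure Ω) [IsProbabilityMeasure P]
    (Y : Ω → ℝ) (hY : Measurable Y) (hYnn : ∀ᵐ ω ∂P, 0 ≤ Y ω)
    (g : ℝ → ℝ) (hg_meas : Measurable g) (hg_nn : ∀ r, 0 ≤ g r)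
    (hg_cont : ContinuousOn g (Set.Ioi 0))
    (hg_dens : ∀ B : Set ℝ, MeasurableSet B →
      Measure.map Y P B = ENNReal.ofReal (∫ r in B ∩ Set.Ioi 0, g r))
    (b c : ℝ) (hb : 0 < b) (hc : 0 < c)
    (hineq : ∀ r > (0 : ℝ), ∀ ε > (0 : ℝ),
      P {ω | Real.exp (-(ε * b)) * r < Y ω ∧ Y ω ≤ r} ≤
        ENNReal.ofReal (Real.exp (ε * c) - 1) * P {ω | r < Y ω}) :
    ∀ r > (0 : ℝ), b * r * g r ≤ c * (P {ω | r < Y ω}).toReal := by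
  intro r hr
  set T : ℝ := (P {ω | r < Y ω}).toReal with hT
  have hTnn : 0 ≤ T := ENNReal.toReal_nonneg
  -- left endpoint function
  set a : ℝ → ℝ := fun ε => Real.exp (-(ε * b)) * r with ha
  have ha0 : a 0 = r := by simp [ha]
  have hapos : ∀ ε, 0 < a ε := fun ε => mul_pos (Real.exp_pos _) hr
  have haler : ∀ ε ≥ (0:ℝ), a ε ≤ r := by
    intro ε hε
    have h1 : Real.exp (-(ε * b)) ≤ 1 := Real.exp_le_one_iff.2 (by nlinarith)
    exact mul_le_of_le_one_left hr.le h1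
  -- h ε = ∫ x in a ε .. r, g x
  set h : ℝ → ℝ := fun ε => ∫ x in a ε..r, g x with hh
  -- derivative of h at 0 is b * r * g r
  have hG : HasDerivAt (fun u => ∫ x in u..r, g x) (-g r) r := by
    apply intervalIntegral.integral_hasDerivAt_left
    · simp
    · exact hg_meas.stronglyMeasurable.stronglyMeasurableAtFilter
    · exact hg_cont.continuousAt (Ioi_mem_nhds hr)
  have hA : HasDerivAt a (-b * r) 0 := by
    have h1 : HasDerivAt (fun ε : ℝ => -(ε * b)) (-b) 0 := by
      simpa using ((hasDerivAt_id (0:ℝ)).mul_const b).fun_neg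
    have h2 : HasDerivAt (fun ε : ℝ => Real.exp (-(ε * b))) (Real.exp (-(0*b)) * (-b)) 0 :=
      h1.exp
    simpa [ha, mul_comm, mul_assoc, mul_left_comm] using h2.mul_const r
  have hh' : HasDerivAt h (b * r * g r) 0 := by
    have hG2 : HasDerivAt (fun u => ∫ x in u..r, g x) (-g (a 0)) (a 0) := by
      rw [ha0]; exact hG
    have hcomp := hG2.comp 0 hA
    have heq : -g (a 0) * (-b * r) = b * r * g r := by rw [ha0]; ring
    rw [heq] at hcomp
    exact hcomp
  -- ψ
  set ψ : ℝ → ℝ := fun ε => (Real.exp (ε * c) - 1) * T with hψ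
  have hψ' : HasDerivAt ψ (c * T) 0 := by
    have h1 : HasDerivAt (fun ε : ℝ => ε * c) c 0 := by
      simpa using (hasDerivAt_id (0:ℝ)).mul_const c
    have h2 : HasDerivAt (fun ε : ℝ => Real.exp (ε * c) - 1) (Real.exp (0*c) * c) 0 :=
      h1.exp.sub_const 1
    simpa [hψ, mul_comm, mul_assoc, mul_left_comm] using h2.mul_const T
  -- slope limits along 𝓝[>] 0
  have hmono : nhdsWithin (0:ℝ) (Set.Ioi 0) ≤ nhdsWithin 0 {(0:ℝ)}ᶜ :=
    nhdsWithin_mono 0 (fun x hx => ne_of_gt hx)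
  have h0 : h 0 = 0 := by simp [hh, ha0]
  have hψ0 : ψ 0 = 0 := by simp [hψ]
  have lim1 : Filter.Tendsto (fun ε => h ε / ε) (nhdsWithin 0 (Set.Ioi 0)) (nhds (b * r * g r)) := by
    have := (hasDerivAt_iff_tendsto_slope.1 hh').mono_left hmono
    refine this.congr' ?_
    filter_upwards [self_mem_nhdsWithin] with ε hε
    simp [slope, h0, div_eq_inv_mul]
  have lim2 : Filter.Tendsto (fun ε => ψ ε / ε) (nhdsWithin 0 (Set.Ioi 0)) (nhds (c * T)) := by
    have := (hasDerivAt_iff_tendsto_slope.1 hψ').mono_left hmono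
    refine this.congr' ?_
    filter_upwards [self_mem_nhdsWithin] with ε hε
    simp [slope, hψ0, div_eq_inv_mul]
  -- key inequality for ε > 0
  have key : ∀ ε > (0:ℝ), h ε ≤ ψ ε := by
    intro ε hε
    have hint : ∫ x in a ε..r, g x = ∫ x in Set.Ioc (a ε) r, g x :=
      intervalIntegral.integral_of_le (haler ε hε.le)
    have hsub : Set.Ioc (a ε) r ⊆ Set.Ioi 0 := fun x hx => lt_trans (hapos ε) hx.1
    have hinter : Set.Ioc (a ε) r ∩ Set.Ioi 0 = Set.Ioc (a ε) r :=
      Set.inter_eq_self_of_subset_left hsub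
    have hPeq : P {ω | a ε < Y ω ∧ Y ω ≤ r}
        = ENNReal.ofReal (∫ x in Set.Ioc (a ε) r, g x) := by
      have : {ω | a ε < Y ω ∧ Y ω ≤ r} = Y ⁻¹' Set.Ioc (a ε) r := rfl
      rw [this, ← Measure.map_apply hY measurableSet_Ioc,
        hg_dens _ measurableSet_Ioc, hinter]
    have hle := hineq r hr ε hε
    rw [hPeq] at hle
    have hfin : ENNReal.ofReal (Real.exp (ε * c) - 1) * P {ω | r < Y ω} ≠ ⊤ :=
      ENNReal.mul_ne_top ENNReal.ofReal_ne_top (measure_ne_top _ _)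
    have := (ENNReal.ofReal_le_iff_le_toReal hfin).1 hle
    rw [ENNReal.toReal_mul, ENNReal.toReal_ofReal (by nlinarith [Real.add_one_le_exp (ε * c), mul_pos hε hc])] at this
    · calc h ε = ∫ x in Set.Ioc (a ε) r, g x := hint
        _ ≤ (Real.exp (ε * c) - 1) * T := this
  have hineq' : (fun ε => h ε / ε) ≤ᶠ[nhdsWithin 0 (Set.Ioi 0)] (fun ε => ψ ε / ε) := by
    filter_upwards [self_mem_nhdsWithin] with ε hε
    have hε' : (0:ℝ) < ε := hε
    exact (div_le_div_iff_of_pos_right hε').mpr (key ε hε)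
  exact le_of_tendsto_of_tendsto lim1 lim2 hineq'
end

section
/- Let A be a nonnegative random variable whose law has a density a : (0,∞) → [0,∞) with respect to Lebesgue measure, and suppose there exist ρ > 0 and C > 0 with lim_{R→∞} R^ρ · P(A > R) = C. Then for all 0 < α < β and every continuous function ψ : [α,β] → ℝ, lim_{r→∞} r^ρ · ∫_{αr}^{βr} a(u) ψ(u/r) du = C·ρ · ∫_α^β z^{−ρ−1} ψ(z) dz. -/
open MeasureTheory Filter

open Set

private lemma aux_integrableOn {Ω : Type*} [MeasurableSpace Ω] (P : Measure Ω) [IsProbabilityMeasure P]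
    (A : Ω → ℝ) (hA : Measurable A)
    (a : ℝ → ℝ) (ha_meas : Measurable a) (ha_nn : ∀ u, 0 ≤ a u)
    (ha_dens : ∀ B : Set ℝ, MeasurableSet B →
      Measure.map A P B = ENNReal.ofReal (∫ u in B ∩ Set.Ioi 0, a u))
    {ε : ℝ} (hε : 0 < ε) : IntegrableOn a (Set.Ioi ε) := by
  set B : ℕ → Set ℝ := fun n => Ioi ε ∩ Iio (n : ℝ) ∩ a ⁻¹' (Iio (n : ℝ)) with hB
  have hBm : ∀ n, MeasurableSet (B n) := fun n =>
    (measurableSet_Ioi.inter measurableSet_Iio).inter (ha_meas measurableSet_Iio)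
  have hInt : ∀ n : ℕ, IntegrableOn a (B n) := by
    intro n
    apply Measure.integrableOn_of_bounded (M := (n : ℝ))
    · exact ((measure_mono (fun x hx => ⟨hx.1.1, hx.1.2.le⟩ : B n ⊆ Ioc ε n)).trans_lt
        measure_Ioc_lt_top).ne
    · exact ha_meas.aestronglyMeasurable
    · refine (ae_restrict_iff' (hBm n)).mpr (ae_of_all _ fun x hx => ?_)
      rw [Real.norm_eq_abs, abs_of_nonneg (ha_nn x)]
      exact hx.2.le
  have hle : ∀ n, ∫⁻ u in B n, ENNReal.ofReal (a u) ≤ 1 := by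
    intro n
    have h1 := ha_dens _ (hBm n)
    have h2 : B n ∩ Ioi 0 = B n :=
      inter_eq_left.mpr fun x hx => lt_trans hε hx.1.1
    rw [h2] at h1
    have h3 : ∫⁻ u in B n, ENNReal.ofReal (a u) = ENNReal.ofReal (∫ u in B n, a u) :=
      (ofReal_integral_eq_lintegral_ofReal (hInt n) (ae_of_all _ ha_nn)).symm
    rw [h3, ← h1]
    exact prob_le_one
  have hmono : Monotone B := by
    intro m n hmn x hx
    have hc : (m : ℝ) ≤ (n : ℝ) := by exact_mod_cast hmn
    exact ⟨⟨hx.1.1, lt_of_lt_of_le hx.1.2 hc⟩, lt_of_lt_of_le hx.2 hc⟩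
  have hUnion : ⋃ n, B n = Ioi ε := by
    ext x
    constructor
    · intro hx
      obtain ⟨n, hn⟩ := mem_iUnion.mp hx
      exact hn.1.1
    · intro hx
      obtain ⟨n, hn⟩ := exists_nat_gt (max x (a x))
      exact mem_iUnion.mpr ⟨n, ⟨hx, lt_of_le_of_lt (le_max_left _ _) hn⟩,
        lt_of_le_of_lt (le_max_right _ _) hn⟩
  have key : ∫⁻ u in Ioi ε, ENNReal.ofReal (a u) ≤ 1 := by
    set ν : Measure ℝ := volume.withDensity (fun u => ENNReal.ofReal (a u)) with hν
    have hdir : Directed (· ⊆ ·) B := hmono.directed_le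
    calc ∫⁻ u in Ioi ε, ENNReal.ofReal (a u) = ν (Ioi ε) :=
          (withDensity_apply _ measurableSet_Ioi).symm
      _ = ν (⋃ n, B n) := by rw [hUnion]
      _ = ⨆ n, ν (B n) := hdir.measure_iUnion (μ := ν)
      _ ≤ 1 := by
          refine iSup_le fun n => ?_
          rw [withDensity_apply _ (hBm n)]
          exact hle n
  refine ⟨ha_meas.aestronglyMeasurable, ?_⟩
  rw [hasFiniteIntegral_iff_ofReal (ae_of_all _ ha_nn)]
  exact lt_of_le_of_lt key ENNReal.one_lt_top

private lemma aux_tail_diff (a : ℝ → ℝ) (ha_nn : ∀ u, 0 ≤ a u)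
    (hint : ∀ ε : ℝ, 0 < ε → IntegrableOn a (Set.Ioi ε))
    {x y : ℝ} (hx : 0 < x) (hxy : x ≤ y) :
    ∫ u in Ioc x y, a u = (∫ u in Ioi x, a u) - ∫ u in Ioi y, a u := by
  have h1 : Ioc x y ∪ Ioi y = Ioi x := Ioc_union_Ioi_eq_Ioi hxy
  have h2 : (∫ u in Ioi x, a u) = (∫ u in Ioc x y, a u) + ∫ u in Ioi y, a u := by
    rw [← h1]
    exact setIntegral_union (Ioc_disjoint_Ioi le_rfl) measurableSet_Ioi
      ((hint x hx).mono_set Ioc_subset_Ioi_self)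
      ((hint x hx).mono_set (Ioi_subset_Ioi hxy))
  linarith

private lemma aux_tail_tendsto (a : ℝ → ℝ) (ρ C : ℝ)
    (htail : Tendsto (fun R : ℝ => R ^ ρ * ∫ u in Ioi R, a u) atTop (nhds C))
    {s : ℝ} (hs : 0 < s) :
    Tendsto (fun r : ℝ => r ^ ρ * ∫ u in Ioi (s * r), a u) atTop
      (nhds (C * s ^ (-ρ))) := by
  have hcomp : Tendsto (fun r : ℝ => s * r) atTop atTop :=
    Tendsto.const_mul_atTop hs tendsto_id
  have h1 : Tendsto (fun r : ℝ => s ^ (-ρ) * ((s * r) ^ ρ * ∫ u in Ioi (s * r), a u))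
      atTop (nhds (s ^ (-ρ) * C)) := (htail.comp hcomp).const_mul _
  rw [mul_comm C]
  refine h1.congr' ?_
  filter_upwards [eventually_gt_atTop (0 : ℝ)] with r hr
  have : (s * r) ^ ρ = s ^ ρ * r ^ ρ := Real.mul_rpow hs.le hr.le
  rw [this]
  rw [show s ^ (-ρ) * (s ^ ρ * r ^ ρ * ∫ u in Ioi (s * r), a u)
      = (s ^ (-ρ) * s ^ ρ) * (r ^ ρ * ∫ u in Ioi (s * r), a u) by ring,
    ← Real.rpow_add hs, neg_add_cancel, Real.rpow_zero, one_mul]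

private lemma aux_core (a : ℝ → ℝ) (ha_meas : Measurable a) (ha_nn : ∀ u, 0 ≤ a u)
    (hint : ∀ ε : ℝ, 0 < ε → IntegrableOn a (Set.Ioi ε))
    (q q' : ℝ → ℝ) (hq : ∀ x, HasDerivAt q (q' x) x) (hq' : Continuous q')
    {α β r : ℝ} (hα : 0 < α) (hαβ : α < β) (hr : 0 < r) :
    ∫ u in Ioc (α*r) (β*r), a u * q (u/r) =
      q β * (∫ u in Ioc (α*r) (β*r), a u)
        - ∫ s in Ioc α β, q' s * ∫ u in Ioc (α*r) (s*r), a u := by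
  have hαr : 0 < α * r := mul_pos hα hr
  have hab : α * r ≤ β * r := mul_le_mul_of_nonneg_right hαβ.le hr.le
  have haInt : IntegrableOn a (Ioc (α*r) (β*r)) :=
    (hint _ hαr).mono_set Ioc_subset_Ioi_self
  obtain ⟨M, hM⟩ := isCompact_Icc.exists_bound_of_continuousOn (hq'.continuousOn (s := Icc α β))
  have hM0 : 0 ≤ M := le_trans (norm_nonneg (q' α)) (hM α ⟨le_refl α, hαβ.le⟩)
  have hdiv : ∀ u ∈ Ioc (α*r) (β*r), α < u / r ∧ u / r ≤ β := by
    intro u hu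
    constructor
    · rw [lt_div_iff₀ hr]; exact hu.1
    · rw [div_le_iff₀ hr]; exact hu.2
  set κ : ℝ → ℝ := fun u => ∫ s in (u/r)..β, q' s with hκ
  have hκcont : Continuous κ := by
    have hprim : Continuous fun x : ℝ => ∫ s in β..x, q' s :=
      intervalIntegral.continuous_primitive (fun c d => hq'.intervalIntegrable c d) β
    have h2 : κ = fun u : ℝ => -(∫ s in β..(u/r), q' s) :=
      funext fun u => intervalIntegral.integral_symm β (u/r)
    rw [h2]
    exact (hprim.comp (continuous_id.div_const r)).neg
  have hκIoc : ∀ u ∈ Ioc (α*r) (β*r), κ u = ∫ s in Ioc (u/r) β, q' s := fun u hu =>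
    intervalIntegral.integral_of_le (hdiv u hu).2
  have hκbdd : ∀ u ∈ Ioc (α*r) (β*r), ‖κ u‖ ≤ M * (β - α) := by
    intro u hu
    rw [hκIoc u hu]
    have h1 : ‖∫ s in Ioc (u/r) β, q' s‖ ≤ M * (volume (Ioc (u/r) β)).toReal := by
      apply norm_setIntegral_le_of_norm_le_const
      · exact measure_Ioc_lt_top
      · intro x hx
        exact hM x ⟨le_of_lt (lt_of_lt_of_le (hdiv u hu).1 hx.1.le), hx.2⟩
    refine h1.trans ?_
    rw [Real.volume_Ioc]
    rcases le_or_gt (u/r) β with h | h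
    · rw [ENNReal.toReal_ofReal (by linarith)]
      have := (hdiv u hu).1
      nlinarith
    · rw [ENNReal.ofReal_eq_zero.mpr (by linarith), ENNReal.toReal_zero]
      nlinarith
  have hq_eq : ∀ u ∈ Ioc (α*r) (β*r), q (u/r) = q β - κ u := by
    intro u hu
    have h1 : ∫ s in (u/r)..β, q' s = q β - q (u/r) :=
      intervalIntegral.integral_eq_sub_of_hasDerivAt (fun x _ => hq x)
        (hq'.intervalIntegrable _ _)
    have h2 : κ u = ∫ s in (u/r)..β, q' s := rfl
    rw [h2, h1]; ring
  have I2 : IntegrableOn (fun u => a u * κ u) (Ioc (α*r) (β*r)) := by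
    apply Integrable.mono' (haInt.mul_const (M * (β - α)))
    · exact ((ha_meas.mul hκcont.measurable).aestronglyMeasurable).restrict
    · refine (ae_restrict_iff' measurableSet_Ioc).mpr (ae_of_all _ fun u hu => ?_)
      rw [norm_mul, Real.norm_eq_abs (a u), abs_of_nonneg (ha_nn u)]
      exact mul_le_mul_of_nonneg_left (hκbdd u hu) (ha_nn u)
  -- Fubini part
  have hTm : MeasurableSet {p : ℝ × ℝ | p.1 < p.2 * r} :=
    measurableSet_lt measurable_fst (measurable_snd.mul_const r)
  have hfub : ∫ u in Ioc (α*r) (β*r), a u * κ u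
      = ∫ s in Ioc α β, q' s * ∫ u in Ioc (α*r) (s*r), a u := by
    haveI i1 : IsFiniteMeasure (volume.restrict (Ioc (α*r) (β*r))) :=
      ⟨by rw [Measure.restrict_apply_univ]; exact measure_Ioc_lt_top⟩
    haveI i2 : IsFiniteMeasure (volume.restrict (Ioc α β)) :=
      ⟨by rw [Measure.restrict_apply_univ]; exact measure_Ioc_lt_top⟩
    have hgint : Integrable (Function.uncurry fun u s =>
        a u * ({p : ℝ × ℝ | p.1 < p.2 * r}.indicator (fun p => q' p.2) (u, s)))
        ((volume.restrict (Ioc (α*r) (β*r))).prod (volume.restrict (Ioc α β))) := by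
      apply Integrable.mono' ((haInt.mul_const M).mul_prod (integrable_const 1))
      · exact ((ha_meas.comp measurable_fst).mul
          ((hq'.measurable.comp measurable_snd).indicator hTm)).aestronglyMeasurable
      · rw [Measure.prod_restrict]
        refine (ae_restrict_iff' (measurableSet_Ioc.prod measurableSet_Ioc)).mpr
          (ae_of_all _ fun z hz => ?_)
        have hz2 : z.2 ∈ Icc α β := ⟨hz.2.1.le, hz.2.2⟩
        have hind : ‖{p : ℝ × ℝ | p.1 < p.2 * r}.indicator (fun p : ℝ × ℝ => q' p.2) z‖ ≤ M := by
          by_cases h : z ∈ {p : ℝ × ℝ | p.1 < p.2 * r}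
          · rw [Set.indicator_of_mem h]; exact hM z.2 hz2
          · rw [Set.indicator_of_notMem h, norm_zero]; exact hM0
        show ‖a z.1 * _‖ ≤ a z.1 * M * 1
        rw [mul_one, norm_mul, Real.norm_eq_abs (a z.1), abs_of_nonneg (ha_nn z.1)]
        exact mul_le_mul_of_nonneg_left hind (ha_nn z.1)
    have hswap := integral_integral_swap hgint
    have hL : (∫ u in Ioc (α*r) (β*r), (∫ s in Ioc α β,
          a u * ({p : ℝ × ℝ | p.1 < p.2 * r}.indicator (fun p => q' p.2) (u, s))))
        = ∫ u in Ioc (α*r) (β*r), a u * κ u := by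
      refine setIntegral_congr_fun measurableSet_Ioc (fun u hu => ?_)
      have e1 : ∀ s : ℝ, a u * ({p : ℝ × ℝ | p.1 < p.2 * r}.indicator (fun p => q' p.2) (u, s))
          = a u * ((Ioi (u/r)).indicator q' s) := by
        intro s
        congr 1
        by_cases h : u < s * r
        · rw [Set.indicator_of_mem (by exact h : (u, s) ∈ {p : ℝ × ℝ | p.1 < p.2 * r}),
            Set.indicator_of_mem (by rw [mem_Ioi, div_lt_iff₀ hr]; exact h)]
        · rw [Set.indicator_of_notMem (by exact h : (u, s) ∉ {p : ℝ × ℝ | p.1 < p.2 * r}),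
            Set.indicator_of_notMem (by rw [mem_Ioi, div_lt_iff₀ hr]; exact h)]
      have hseteq : Ioc α β ∩ Ioi (u/r) = Ioc (u/r) β := by
        ext s
        constructor
        · rintro ⟨⟨_, h2⟩, h3⟩; exact ⟨h3, h2⟩
        · rintro ⟨h1, h2⟩; exact ⟨⟨lt_trans (hdiv u hu).1 h1, h2⟩, h1⟩
      calc (∫ s in Ioc α β,
            a u * ({p : ℝ × ℝ | p.1 < p.2 * r}.indicator (fun p => q' p.2) (u, s)))
          = ∫ s in Ioc α β, a u * ((Ioi (u/r)).indicator q' s) := by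
            exact integral_congr_ae (ae_of_all _ e1)
        _ = a u * ∫ s in Ioc α β, (Ioi (u/r)).indicator q' s := integral_const_mul _ _
        _ = a u * ∫ s in Ioc α β ∩ Ioi (u/r), q' s := by
            rw [setIntegral_indicator measurableSet_Ioi]
        _ = a u * ∫ s in Ioc (u/r) β, q' s := by rw [hseteq]
        _ = a u * κ u := by rw [hκIoc u hu]
    have hR : (∫ s in Ioc α β, (∫ u in Ioc (α*r) (β*r),
          a u * ({p : ℝ × ℝ | p.1 < p.2 * r}.indicator (fun p => q' p.2) (u, s))))
        = ∫ s in Ioc α β, q' s * ∫ u in Ioc (α*r) (s*r), a u := by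
      refine setIntegral_congr_fun measurableSet_Ioc (fun s hs => ?_)
      have e1 : ∀ u : ℝ, a u * ({p : ℝ × ℝ | p.1 < p.2 * r}.indicator (fun p => q' p.2) (u, s))
          = (Iio (s*r)).indicator (fun u => a u * q' s) u := by
        intro u
        by_cases h : u < s * r
        · rw [Set.indicator_of_mem (by exact h : (u, s) ∈ {p : ℝ × ℝ | p.1 < p.2 * r}),
            Set.indicator_of_mem (by exact h : u ∈ Iio (s*r))]
        · rw [Set.indicator_of_notMem (by exact h : (u, s) ∉ {p : ℝ × ℝ | p.1 < p.2 * r}),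
            Set.indicator_of_notMem (by exact h : u ∉ Iio (s*r)), mul_zero]
      have hsr : s * r ≤ β * r := mul_le_mul_of_nonneg_right hs.2 hr.le
      have hseteq : Ioc (α*r) (β*r) ∩ Iio (s*r) = Ioo (α*r) (s*r) := by
        ext u
        constructor
        · rintro ⟨⟨h1, _⟩, h3⟩; exact ⟨h1, h3⟩
        · rintro ⟨h1, h2⟩; exact ⟨⟨h1, le_trans h2.le hsr⟩, h2⟩
      calc (∫ u in Ioc (α*r) (β*r),
            a u * ({p : ℝ × ℝ | p.1 < p.2 * r}.indicator (fun p => q' p.2) (u, s)))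
          = ∫ u in Ioc (α*r) (β*r), (Iio (s*r)).indicator (fun u => a u * q' s) u := by
            exact integral_congr_ae (ae_of_all _ e1)
        _ = ∫ u in Ioc (α*r) (β*r) ∩ Iio (s*r), a u * q' s := by
            rw [setIntegral_indicator measurableSet_Iio]
        _ = ∫ u in Ioo (α*r) (s*r), a u * q' s := by rw [hseteq]
        _ = ∫ u in Ioc (α*r) (s*r), a u * q' s := (integral_Ioc_eq_integral_Ioo).symm
        _ = (∫ u in Ioc (α*r) (s*r), a u) * q' s := integral_mul_const _ _
        _ = q' s * ∫ u in Ioc (α*r) (s*r), a u := mul_comm _ _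
    rw [← hL, ← hR]
    exact hswap
  calc ∫ u in Ioc (α*r) (β*r), a u * q (u/r)
      = ∫ u in Ioc (α*r) (β*r), (a u * q β - a u * κ u) :=
        setIntegral_congr_fun measurableSet_Ioc (fun u hu => by rw [hq_eq u hu]; ring)
    _ = (∫ u in Ioc (α*r) (β*r), a u * q β) - ∫ u in Ioc (α*r) (β*r), a u * κ u :=
        integral_sub (haInt.mul_const _) I2
    _ = q β * (∫ u in Ioc (α*r) (β*r), a u)
        - ∫ s in Ioc α β, q' s * ∫ u in Ioc (α*r) (s*r), a u := by
        rw [integral_mul_const, mul_comm, hfub]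

private lemma aux_poly_limit (a : ℝ → ℝ) (ha_meas : Measurable a) (ha_nn : ∀ u, 0 ≤ a u)
    (hint : ∀ ε : ℝ, 0 < ε → IntegrableOn a (Set.Ioi ε))
    (ρ C : ℝ) (hρ : 0 < ρ) (hC : 0 < C)
    (htail : Tendsto (fun R : ℝ => R ^ ρ * ∫ u in Ioi R, a u) atTop (nhds C))
    {α β : ℝ} (hα : 0 < α) (hαβ : α < β)
    (q q' : ℝ → ℝ) (hq : ∀ x, HasDerivAt q (q' x) x) (hq' : Continuous q') :
    Tendsto (fun r : ℝ => r ^ ρ * ∫ u in (α*r)..(β*r), a u * q (u/r)) atTop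
      (nhds (C * ρ * ∫ z in α..β, z ^ (-ρ-1) * q z)) := by
  haveI i2 : IsFiniteMeasure (volume.restrict (Ioc α β)) :=
    ⟨by rw [Measure.restrict_apply_univ]; exact measure_Ioc_lt_top⟩
  obtain ⟨M, hM⟩ := isCompact_Icc.exists_bound_of_continuousOn (hq'.continuousOn (s := Icc α β))
  have hM0 : 0 ≤ M := le_trans (norm_nonneg (q' α)) (hM α ⟨le_refl α, hαβ.le⟩)
  set K : ℝ := C * α ^ (-ρ) + 1 with hK
  have hK0 : 0 ≤ K := by
    have := Real.rpow_pos_of_pos hα (-ρ)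
    nlinarith
  have hKev : ∀ᶠ r : ℝ in atTop, r ^ ρ * ∫ u in Ioi (α*r), a u ≤ K := by
    have h1 : ∀ᶠ x in nhds (C * α ^ (-ρ)), x ≤ K := eventually_le_nhds (by rw [hK]; linarith)
    exact (aux_tail_tendsto a ρ C htail hα).eventually h1
  -- the limit of the integral term, by dominated convergence
  have hDCT : Tendsto (fun r : ℝ => ∫ s in Ioc α β,
        q' s * (r ^ ρ * ∫ u in Ioc (α*r) (s*r), a u)) atTop
      (nhds (∫ s in Ioc α β, q' s * (C * α ^ (-ρ) - C * s ^ (-ρ)))) := by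
    apply tendsto_integral_filter_of_dominated_convergence (fun _ => M * K)
    · -- measurability
      filter_upwards [eventually_gt_atTop (0 : ℝ)] with r hr
      have hαr : 0 < α * r := mul_pos hα hr
      have ha' : Integrable ((Ioi (α*r)).indicator a) :=
        (hint _ hαr).integrable_indicator measurableSet_Ioi
      have hcont : Continuous (fun s : ℝ => ∫ u in (α*r)..(s*r), (Ioi (α*r)).indicator a u) :=
        (ha'.continuous_primitive (α*r)).comp (continuous_id.mul continuous_const)
      have hEq : EqOn (fun s => q' s * (r ^ ρ * ∫ u in Ioc (α*r) (s*r), a u))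
          (fun s => q' s * (r ^ ρ * ∫ u in (α*r)..(s*r), (Ioi (α*r)).indicator a u))
          (Ioc α β) := by
        intro s hs
        have hsr : α * r ≤ s * r := mul_le_mul_of_nonneg_right hs.1.le hr.le
        have h2 : ∫ u in (α*r)..(s*r), (Ioi (α*r)).indicator a u
            = ∫ u in Ioc (α*r) (s*r), (Ioi (α*r)).indicator a u :=
          intervalIntegral.integral_of_le hsr
        have h3 : ∫ u in Ioc (α*r) (s*r), (Ioi (α*r)).indicator a u
            = ∫ u in Ioc (α*r) (s*r), a u :=
          setIntegral_congr_fun measurableSet_Ioc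
            (fun u hu => Set.indicator_of_mem (mem_Ioi.mpr hu.1) a)
        simp only [h2, h3]
      have hcont2 : ContinuousOn (fun s => q' s * (r ^ ρ * ∫ u in Ioc (α*r) (s*r), a u))
          (Ioc α β) :=
        ContinuousOn.congr (hq'.continuousOn.mul ((continuous_const.mul hcont).continuousOn))
          hEq
      exact hcont2.aestronglyMeasurable measurableSet_Ioc
    · -- bound
      filter_upwards [eventually_gt_atTop (0 : ℝ), hKev] with r hr hKr
      refine (ae_restrict_iff' measurableSet_Ioc).mpr (ae_of_all _ fun s hs => ?_)
      have hαr : 0 < α * r := mul_pos hα hr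
      have hsr : α * r ≤ s * r := mul_le_mul_of_nonneg_right hs.1.le hr.le
      have hnn : 0 ≤ ∫ u in Ioc (α*r) (s*r), a u :=
        setIntegral_nonneg measurableSet_Ioc (fun u _ => ha_nn u)
      have hmono : (∫ u in Ioc (α*r) (s*r), a u) ≤ ∫ u in Ioi (α*r), a u :=
        setIntegral_mono_set (hint _ hαr) (ae_of_all _ ha_nn)
          (HasSubset.Subset.eventuallyLE Ioc_subset_Ioi_self)
      have hrp : (0:ℝ) ≤ r ^ ρ := Real.rpow_nonneg hr.le ρ
      have h2 : r ^ ρ * ∫ u in Ioc (α*r) (s*r), a u ≤ K :=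
        le_trans (mul_le_mul_of_nonneg_left hmono hrp) hKr
      rw [norm_mul]
      have h3 : ‖r ^ ρ * ∫ u in Ioc (α*r) (s*r), a u‖ = r ^ ρ * ∫ u in Ioc (α*r) (s*r), a u :=
        by rw [Real.norm_eq_abs, abs_of_nonneg (mul_nonneg hrp hnn)]
      rw [h3]
      exact mul_le_mul (hM s ⟨hs.1.le, hs.2⟩) h2 (mul_nonneg hrp hnn) hM0
    · exact integrable_const _
    · -- pointwise limit
      refine (ae_restrict_iff' measurableSet_Ioc).mpr (ae_of_all _ fun s hs => ?_)
      have hs0 : 0 < s := lt_trans hα hs.1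
      have h1 : Tendsto (fun r : ℝ =>
          q' s * (r ^ ρ * (∫ u in Ioi (α*r), a u) - r ^ ρ * ∫ u in Ioi (s*r), a u)) atTop
          (nhds (q' s * (C * α ^ (-ρ) - C * s ^ (-ρ)))) :=
        ((aux_tail_tendsto a ρ C htail hα).sub (aux_tail_tendsto a ρ C htail hs0)).const_mul _
      refine h1.congr' ?_
      filter_upwards [eventually_gt_atTop (0 : ℝ)] with r hr
      have hαr : 0 < α * r := mul_pos hα hr
      have hsr : α * r ≤ s * r := mul_le_mul_of_nonneg_right hs.1.le hr.le
      rw [aux_tail_diff a ha_nn hint hαr hsr]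
      ring
  have hfirst : Tendsto (fun r : ℝ => q β * (r ^ ρ * ∫ u in Ioc (α*r) (β*r), a u)) atTop
      (nhds (q β * (C * α ^ (-ρ) - C * β ^ (-ρ)))) := by
    have h1 : Tendsto (fun r : ℝ =>
        q β * (r ^ ρ * (∫ u in Ioi (α*r), a u) - r ^ ρ * ∫ u in Ioi (β*r), a u)) atTop
        (nhds (q β * (C * α ^ (-ρ) - C * β ^ (-ρ)))) :=
      ((aux_tail_tendsto a ρ C htail hα).sub
        (aux_tail_tendsto a ρ C htail (lt_trans hα hαβ))).const_mul _
    refine h1.congr' ?_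
    filter_upwards [eventually_gt_atTop (0 : ℝ)] with r hr
    rw [aux_tail_diff a ha_nn hint (mul_pos hα hr) (mul_le_mul_of_nonneg_right hαβ.le hr.le)]
    ring
  have hcomb := hfirst.sub hDCT
  have hmain : Tendsto (fun r : ℝ => r ^ ρ * ∫ u in (α*r)..(β*r), a u * q (u/r)) atTop
      (nhds (q β * (C * α ^ (-ρ) - C * β ^ (-ρ))
        - ∫ s in Ioc α β, q' s * (C * α ^ (-ρ) - C * s ^ (-ρ)))) := by
    refine hcomb.congr' ?_
    filter_upwards [eventually_gt_atTop (0 : ℝ)] with r hr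
    have hab : α * r ≤ β * r := mul_le_mul_of_nonneg_right hαβ.le hr.le
    rw [intervalIntegral.integral_of_le hab,
      aux_core a ha_meas ha_nn hint q q' hq hq' hα hαβ hr, mul_sub]
    have h4 : r ^ ρ * ∫ s in Ioc α β, q' s * ∫ u in Ioc (α*r) (s*r), a u
        = ∫ s in Ioc α β, q' s * (r ^ ρ * ∫ u in Ioc (α*r) (s*r), a u) := by
      rw [← integral_const_mul]
      exact integral_congr_ae (ae_of_all _ fun s => by ring)
    rw [← h4]
    ring
  -- identify the limit value
  have hval : q β * (C * α ^ (-ρ) - C * β ^ (-ρ))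
      - (∫ s in Ioc α β, q' s * (C * α ^ (-ρ) - C * s ^ (-ρ)))
      = C * ρ * ∫ z in α..β, z ^ (-ρ-1) * q z := by
    have huIcc : uIcc α β = Icc α β := uIcc_of_le hαβ.le
    have hq'int : IntervalIntegrable q' volume α β := hq'.intervalIntegrable _ _
    have hpow_cont : ContinuousOn (fun s : ℝ => s ^ (-ρ)) (uIcc α β) := by
      rw [huIcc]
      exact ContinuousOn.rpow_const continuousOn_id
        (fun x hx => Or.inl (ne_of_gt (lt_of_lt_of_le hα hx.1)))
    have hpow1_cont : ContinuousOn (fun s : ℝ => (-ρ) * s ^ (-ρ-1)) (uIcc α β) := by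
      rw [huIcc]
      exact continuousOn_const.mul (ContinuousOn.rpow_const continuousOn_id
        (fun x hx => Or.inl (ne_of_gt (lt_of_lt_of_le hα hx.1))))
    have hA1 : ∫ s in α..β, q' s = q β - q α :=
      intervalIntegral.integral_eq_sub_of_hasDerivAt (fun x _ => hq x) hq'int
    have hparts : ∫ s in α..β, q s * ((-ρ) * s ^ (-ρ-1))
        = q β * β ^ (-ρ) - q α * α ^ (-ρ) - ∫ s in α..β, q' s * s ^ (-ρ) := by
      apply intervalIntegral.integral_mul_deriv_eq_deriv_mul (fun x _ => hq x)
      · intro x hx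
        rw [huIcc] at hx
        have hx0 : x ≠ 0 := ne_of_gt (lt_of_lt_of_le hα hx.1)
        exact Real.hasDerivAt_rpow_const (p := -ρ) (Or.inl hx0) (x := x)
      · exact hq'int
      · exact hpow1_cont.intervalIntegrable
    have hX : ∫ s in α..β, q s * ((-ρ) * s ^ (-ρ-1))
        = (-ρ) * ∫ z in α..β, z ^ (-ρ-1) * q z := by
      rw [← intervalIntegral.integral_const_mul]
      exact intervalIntegral.integral_congr (fun s _ => by ring)
    have hsplit : (∫ s in Ioc α β, q' s * (C * α ^ (-ρ) - C * s ^ (-ρ)))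
        = C * α ^ (-ρ) * (q β - q α) - C * ∫ s in α..β, q' s * s ^ (-ρ) := by
      rw [← intervalIntegral.integral_of_le hαβ.le]
      have h1 : ∫ s in α..β, q' s * (C * α ^ (-ρ) - C * s ^ (-ρ))
          = (∫ s in α..β, C * α ^ (-ρ) * q' s) - ∫ s in α..β, C * (q' s * s ^ (-ρ)) := by
        rw [← intervalIntegral.integral_sub]
        · exact intervalIntegral.integral_congr (fun s _ => by ring)
        · exact hq'int.const_mul _
        · exact ((hq'.continuousOn.mul hpow_cont).intervalIntegrable).const_mul _
      rw [h1, intervalIntegral.integral_const_mul, intervalIntegral.integral_const_mul, hA1]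
    rw [hsplit]
    have hXval := hX.symm.trans hparts
    -- hXval : (-ρ) * ∫ z in α..β, z ^ (-ρ-1) * q z = qβ β^(-ρ) - qα α^(-ρ) - ∫ q' s * s^(-ρ)
    nlinarith [hXval]
  rw [← hval]
  exact hmain

/-- If `A ≥ 0` has a density `a` on `(0,∞)` and `R^ρ·P(A > R) → C > 0`, then
for all `0 < α < β` and every continuous `ψ` on `[α,β]`,
`r^ρ ∫_{αr}^{βr} a(u) ψ(u/r) du → C·ρ·∫_α^β z^{−ρ−1} ψ(z) dz` as `r → ∞`. -/
theorem stmt_8 {Ω : Type*} [MeasurableSpace Ω] (P : Measure Ω) [IsProbabilityMeasure P]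
    (A : Ω → ℝ) (hA : Measurable A) (hAnn : ∀ᵐ ω ∂P, 0 ≤ A ω)
    (a : ℝ → ℝ) (ha_meas : Measurable a) (ha_nn : ∀ u, 0 ≤ a u)
    (ha_dens : ∀ B : Set ℝ, MeasurableSet B →
      Measure.map A P B = ENNReal.ofReal (∫ u in B ∩ Set.Ioi 0, a u))
    (ρ C : ℝ) (hρ : 0 < ρ) (hC : 0 < C)
    (htail : Tendsto (fun R : ℝ => R ^ ρ * (P {ω | R < A ω}).toReal) atTop (nhds C)) :
    ∀ α β : ℝ, 0 < α → α < β → ∀ ψ : ℝ → ℝ, ContinuousOn ψ (Set.Icc α β) →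
      Tendsto (fun r : ℝ => r ^ ρ * ∫ u in (α * r)..(β * r), a u * ψ (u / r)) atTop
        (nhds (C * ρ * ∫ z in α..β, z ^ (-ρ - 1) * ψ z)) := by
  intro α β hα hαβ ψ hψ
  have hint : ∀ ε : ℝ, 0 < ε → IntegrableOn a (Set.Ioi ε) := fun ε hε =>
    aux_integrableOn P A hA a ha_meas ha_nn ha_dens hε
  have htail' : Tendsto (fun R : ℝ => R ^ ρ * ∫ u in Ioi R, a u) atTop (nhds C) := by
    refine htail.congr' ?_
    filter_upwards [eventually_gt_atTop (0:ℝ)] with R hR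
    have h2 : Measure.map A P (Ioi R) = P (A ⁻¹' (Ioi R)) :=
      Measure.map_apply hA measurableSet_Ioi
    have h3 : Ioi R ∩ Ioi (0:ℝ) = Ioi R :=
      inter_eq_left.mpr (fun x hx => lt_trans hR hx)
    have h4 := ha_dens (Ioi R) measurableSet_Ioi
    rw [h3] at h4
    have h5 : {ω | R < A ω} = A ⁻¹' (Ioi R) := rfl
    rw [h5, ← h2, h4,
      ENNReal.toReal_ofReal (setIntegral_nonneg measurableSet_Ioi fun u _ => ha_nn u)]
  -- bound for ψ on the compact interval
  obtain ⟨N, hN⟩ := isCompact_Icc.exists_bound_of_continuousOn hψ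
  have hN0 : 0 ≤ N := le_trans (norm_nonneg (ψ α)) (hN α ⟨le_refl α, hαβ.le⟩)
  rw [Metric.tendsto_nhds]
  intro ε hε
  have hαρ : (0:ℝ) < α ^ (-ρ) := Real.rpow_pos_of_pos hα _
  have hαρ1 : (0:ℝ) < α ^ (-ρ-1) := Real.rpow_pos_of_pos hα _
  set K₁ : ℝ := C * α ^ (-ρ) + 1 with hK₁def
  set K₂ : ℝ := C * ρ * (α ^ (-ρ-1) * (β - α)) with hK₂def
  have hK₁ : 0 < K₁ := by rw [hK₁def]; nlinarith
  have hK₂ : 0 < K₂ := by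
    rw [hK₂def]
    exact mul_pos (mul_pos hC hρ) (mul_pos hαρ1 (by linarith))
  set δ : ℝ := ε / (3 * (K₁ + K₂ + 1)) with hδdef
  have hδ : 0 < δ := by rw [hδdef]; positivity
  obtain ⟨p, hp⟩ := exists_polynomial_near_of_continuousOn α β ψ hψ δ hδ
  have hpoly : Tendsto (fun r : ℝ => r ^ ρ * ∫ u in (α*r)..(β*r), a u * p.eval (u/r)) atTop
      (nhds (C * ρ * ∫ z in α..β, z ^ (-ρ-1) * p.eval z)) :=
    aux_poly_limit a ha_meas ha_nn hint ρ C hρ hC htail' hα hαβ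
      (fun x => p.eval x) (fun x => p.derivative.eval x) (fun x => p.hasDerivAt x)
      p.derivative.continuous
  rw [Metric.tendsto_nhds] at hpoly
  have hKev : ∀ᶠ r : ℝ in atTop, r ^ ρ * ∫ u in Ioi (α*r), a u ≤ K₁ := by
    have h1 : ∀ᶠ x in nhds (C * α ^ (-ρ)), x ≤ K₁ :=
      eventually_le_nhds (by rw [hK₁def]; linarith)
    exact (aux_tail_tendsto a ρ C htail' hα).eventually h1
  filter_upwards [eventually_gt_atTop (0:ℝ), hpoly (ε/3) (by positivity), hKev]
    with r hr hevp hKr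
  -- notation
  have hab : α * r ≤ β * r := mul_le_mul_of_nonneg_right hαβ.le hr.le
  have hαr : 0 < α * r := mul_pos hα hr
  have hrp : (0:ℝ) ≤ r ^ ρ := Real.rpow_nonneg hr.le ρ
  have hmemIcc : ∀ u ∈ Ioc (α*r) (β*r), u/r ∈ Icc α β := by
    intro u hu
    constructor
    · rw [le_div_iff₀ hr]; exact hu.1.le
    · rw [div_le_iff₀ hr]; exact hu.2
  have haInt : IntegrableOn a (Ioc (α*r) (β*r)) :=
    (hint _ hαr).mono_set Ioc_subset_Ioi_self
  have hψcontOn : ContinuousOn (fun u => ψ (u/r)) (Ioc (α*r) (β*r)) :=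
    hψ.comp ((continuous_id.div_const r).continuousOn) (fun u hu => hmemIcc u hu)
  have hIψ : IntegrableOn (fun u => a u * ψ (u/r)) (Ioc (α*r) (β*r)) := by
    apply Integrable.mono' (haInt.mul_const N)
    · exact ((ha_meas.aemeasurable.restrict).mul
        (hψcontOn.aemeasurable measurableSet_Ioc)).aestronglyMeasurable
    · refine (ae_restrict_iff' measurableSet_Ioc).mpr (ae_of_all _ fun u hu => ?_)
      rw [norm_mul, Real.norm_eq_abs (a u), abs_of_nonneg (ha_nn u)]
      exact mul_le_mul_of_nonneg_left (hN _ (hmemIcc u hu)) (ha_nn u)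
  have hIp : IntegrableOn (fun u => a u * p.eval (u/r)) (Ioc (α*r) (β*r)) := by
    apply Integrable.mono' (haInt.mul_const (N + δ))
    · exact ((ha_meas.mul
        (p.continuous.comp (continuous_id.div_const r)).measurable).aestronglyMeasurable).restrict
    · refine (ae_restrict_iff' measurableSet_Ioc).mpr (ae_of_all _ fun u hu => ?_)
      rw [norm_mul, Real.norm_eq_abs (a u), abs_of_nonneg (ha_nn u)]
      have h6 : ‖p.eval (u/r)‖ ≤ N + δ := by
        have := hp _ (hmemIcc u hu)
        have := hN _ (hmemIcc u hu)
        rw [Real.norm_eq_abs] at *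
        have h7 : |p.eval (u/r)| ≤ |ψ (u/r)| + |p.eval (u/r) - ψ (u/r)| := by
          have := abs_sub_abs_le_abs_sub (p.eval (u/r)) (ψ (u/r))
          linarith [abs_sub_comm (p.eval (u/r)) (ψ (u/r))]
        linarith
      exact mul_le_mul_of_nonneg_left h6 (ha_nn u)
  -- distance 1 : |Iψ - Ip| ≤ δ * K₁
  have hd1 : dist (r ^ ρ * ∫ u in (α*r)..(β*r), a u * ψ (u/r))
      (r ^ ρ * ∫ u in (α*r)..(β*r), a u * p.eval (u/r)) ≤ δ * K₁ := by
    rw [Real.dist_eq, ← mul_sub, abs_mul, abs_of_nonneg hrp,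
      intervalIntegral.integral_of_le hab, intervalIntegral.integral_of_le hab,
      ← integral_sub hIψ hIp]
    have hb1 : |∫ u in Ioc (α*r) (β*r), (a u * ψ (u/r) - a u * p.eval (u/r))|
        ≤ ∫ u in Ioc (α*r) (β*r), a u * δ := by
      have habs : |∫ u in Ioc (α*r) (β*r), (a u * ψ (u/r) - a u * p.eval (u/r))|
          ≤ ∫ u in Ioc (α*r) (β*r), |a u * ψ (u/r) - a u * p.eval (u/r)| := by
        rw [← Real.norm_eq_abs]
        refine le_trans (norm_integral_le_integral_norm _) (le_of_eq ?_)
        exact integral_congr_ae (ae_of_all _ fun u => Real.norm_eq_abs _)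
      refine le_trans habs ?_
      · refine integral_mono_of_nonneg (ae_of_all _ fun u => abs_nonneg _)
          (haInt.mul_const δ) ?_
        refine (ae_restrict_iff' measurableSet_Ioc).mpr (ae_of_all _ fun u hu => ?_)
        have h8 : a u * ψ (u/r) - a u * p.eval (u/r) = a u * (ψ (u/r) - p.eval (u/r)) := by ring
        show |a u * ψ (u/r) - a u * p.eval (u/r)| ≤ a u * δ
        rw [h8, abs_mul, abs_of_nonneg (ha_nn u)]
        refine mul_le_mul_of_nonneg_left ?_ (ha_nn u)
        rw [abs_sub_comm]
        exact (hp _ (hmemIcc u hu)).le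
    have hb2 : (∫ u in Ioc (α*r) (β*r), a u * δ) = δ * ∫ u in Ioc (α*r) (β*r), a u := by
      rw [integral_mul_const]; ring
    have hb3 : (∫ u in Ioc (α*r) (β*r), a u) ≤ ∫ u in Ioi (α*r), a u :=
      setIntegral_mono_set (hint _ hαr) (ae_of_all _ ha_nn)
        (HasSubset.Subset.eventuallyLE Ioc_subset_Ioi_self)
    have hb5 : |∫ u in Ioc (α*r) (β*r), (a u * ψ (u/r) - a u * p.eval (u/r))|
        ≤ δ * ∫ u in Ioi (α*r), a u :=
      le_trans hb1 (by rw [hb2]; exact mul_le_mul_of_nonneg_left hb3 hδ.le)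
    have hb4 : r ^ ρ * |∫ u in Ioc (α*r) (β*r), (a u * ψ (u/r) - a u * p.eval (u/r))|
        ≤ r ^ ρ * (δ * ∫ u in Ioi (α*r), a u) := mul_le_mul_of_nonneg_left hb5 hrp
    refine le_trans hb4 ?_
    have : r ^ ρ * (δ * ∫ u in Ioi (α*r), a u) = δ * (r ^ ρ * ∫ u in Ioi (α*r), a u) := by ring
    rw [this]
    exact mul_le_mul_of_nonneg_left hKr hδ.le
  -- distance 3 : |Jp - Jψ| ≤ δ * K₂
  have hd3 : dist (C * ρ * ∫ z in α..β, z ^ (-ρ-1) * p.eval z)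
      (C * ρ * ∫ z in α..β, z ^ (-ρ - 1) * ψ z) ≤ δ * K₂ := by
    have hpowcont : ContinuousOn (fun z : ℝ => z ^ (-ρ-1)) (uIcc α β) := by
      rw [uIcc_of_le hαβ.le]
      exact ContinuousOn.rpow_const continuousOn_id
        (fun x hx => Or.inl (ne_of_gt (lt_of_lt_of_le hα hx.1)))
    have hJψint : IntervalIntegrable (fun z => z ^ (-ρ-1) * ψ z) volume α β := by
      apply ContinuousOn.intervalIntegrable
      exact hpowcont.mul (by rw [uIcc_of_le hαβ.le]; exact hψ)
    have hJpint : IntervalIntegrable (fun z => z ^ (-ρ-1) * p.eval z) volume α β :=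
      (hpowcont.mul p.continuous.continuousOn).intervalIntegrable
    rw [Real.dist_eq, ← mul_sub, abs_mul]
    have hCρ : |C * ρ| = C * ρ := abs_of_pos (mul_pos hC hρ)
    rw [hCρ, ← intervalIntegral.integral_sub hJpint hJψint]
    have hb1 : |∫ z in α..β, (z ^ (-ρ-1) * p.eval z - z ^ (-ρ-1) * ψ z)|
        ≤ ∫ z in α..β, α ^ (-ρ-1) * δ := by
      refine le_trans (intervalIntegral.abs_integral_le_integral_abs hαβ.le) ?_
      refine intervalIntegral.integral_mono_on hαβ.le
        ((hJpint.sub hJψint).abs) intervalIntegrable_const (fun z hz => ?_)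
      have hz0 : 0 < z := lt_of_lt_of_le hα hz.1
      have h8 : z ^ (-ρ-1) * p.eval z - z ^ (-ρ-1) * ψ z
          = z ^ (-ρ-1) * (p.eval z - ψ z) := by ring
      rw [h8, abs_mul, abs_of_nonneg (Real.rpow_nonneg hz0.le _)]
      refine mul_le_mul ?_ (hp z hz).le (abs_nonneg _) hαρ1.le
      exact Real.rpow_le_rpow_of_nonpos hα hz.1 (by linarith)
    rw [intervalIntegral.integral_const] at hb1
    have : (β - α) • (α ^ (-ρ-1) * δ) = (β - α) * (α ^ (-ρ-1) * δ) := by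
      rw [smul_eq_mul]
    rw [this] at hb1
    calc C * ρ * |∫ z in α..β, (z ^ (-ρ-1) * p.eval z - z ^ (-ρ-1) * ψ z)|
        ≤ C * ρ * ((β - α) * (α ^ (-ρ-1) * δ)) :=
          mul_le_mul_of_nonneg_left hb1 (mul_pos hC hρ).le
      _ = δ * K₂ := by rw [hK₂def]; ring
  -- combine
  have htri := dist_triangle4
    (r ^ ρ * ∫ u in (α*r)..(β*r), a u * ψ (u/r))
    (r ^ ρ * ∫ u in (α*r)..(β*r), a u * p.eval (u/r))
    (C * ρ * ∫ z in α..β, z ^ (-ρ-1) * p.eval z)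
    (C * ρ * ∫ z in α..β, z ^ (-ρ - 1) * ψ z)
  have hδK : δ * K₁ + δ * K₂ < 2 * (ε/3) := by
    have h9 : δ * (K₁ + K₂) < ε/3 := by
      rw [hδdef, div_mul_eq_mul_div, div_lt_div_iff₀ (by positivity) (by norm_num : (0:ℝ) < 3)]
      nlinarith
    linarith
  have : dist (r ^ ρ * ∫ u in (α * r)..(β * r), a u * ψ (u / r))
      (C * ρ * ∫ z in α..β, z ^ (-ρ - 1) * ψ z) < ε := by
    linarith [htri, hd1, hd3, hevp]
  exact this
end

section
/- Let X and Y be independent nonnegative random variables, with X integrable and the law of Y having a density g : [0,∞) → [0,∞) with respect to Lebesgue measure. Then for every R > 0: P( Y ≤ 2R and X > 2R − Y ) ≤ P(X > R) + ( sup_{s ≥ R} g(s) ) · E[X]. -/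
open MeasureTheory ProbabilityTheory Filter

/-- For independent nonnegative random variables `X, Y` with `X` integrable
and `Y` having a density `g` on `[0,∞)`, for every `R > 0`:
`P(Y ≤ 2R and X > 2R − Y) ≤ P(X > R) + (sup_{s ≥ R} g(s))·E[X]`. -/
theorem stmt_11 {Ω : Type*} [MeasurableSpace Ω] (P : Measure Ω) [IsProbabilityMeasure P]
    (X Y : Ω → ℝ) (hX : Measurable X) (hY : Measurable Y)
    (hindep : IndepFun X Y P)
    (hXnn : ∀ᵐ ω ∂P, 0 ≤ X ω) (hYnn : ∀ᵐ ω ∂P, 0 ≤ Y ω)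
    (hXint : Integrable X P)
    (g : ℝ → ℝ) (hg_meas : Measurable g) (hg_nn : ∀ y, 0 ≤ g y)
    (hg_dens : ∀ B : Set ℝ, MeasurableSet B →
      Measure.map Y P B = ENNReal.ofReal (∫ y in B ∩ Set.Ici 0, g y)) :
    ∀ R > (0 : ℝ),
      P {ω | Y ω ≤ 2 * R ∧ 2 * R - Y ω < X ω} ≤
        P {ω | R < X ω} +
          (⨆ s ∈ Set.Ici R, ENNReal.ofReal (g s)) * ENNReal.ofReal (∫ ω, X ω ∂P) := by
  intro R hR
  set μX := P.map X with hμXdef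
  set μY := P.map Y with hμYdef
  set M : ENNReal := ⨆ s ∈ Set.Ici R, ENNReal.ofReal (g s) with hMdef
  -- Step 1: inclusion into two events
  have hsub : {ω | Y ω ≤ 2*R ∧ 2*R - Y ω < X ω} ⊆
      {ω | R < X ω} ∪ {ω | R < Y ω ∧ Y ω ≤ 2*R ∧ 2*R - Y ω < X ω} := by
    rintro ω ⟨h1, h2⟩
    by_cases h : R < X ω
    · exact Or.inl h
    · push_neg at h
      exact Or.inr ⟨by linarith, h1, h2⟩
  refine le_trans (le_trans (measure_mono hsub) (measure_union_le _ _))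
    (add_le_add_right ?_ _)
  -- Step 2: bound the second event
  -- The restricted law of Y is dominated by M • volume
  have key : μY.restrict (Set.Ioc R (2*R)) ≤ M • (volume.restrict (Set.Ioc R (2*R))) := by
    rw [Measure.le_iff]
    intro B hB
    rw [Measure.restrict_apply hB, Measure.smul_apply, Measure.restrict_apply hB,
      smul_eq_mul]
    have hBset : MeasurableSet (B ∩ Set.Ioc R (2*R)) := hB.inter measurableSet_Ioc
    have h1 : μY (B ∩ Set.Ioc R (2*R)) =
        ENNReal.ofReal (∫ y in (B ∩ Set.Ioc R (2*R)) ∩ Set.Ici 0, g y) :=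
      hg_dens _ hBset
    set S := (B ∩ Set.Ioc R (2*R)) ∩ Set.Ici 0 with hSdef
    have hSmeas : MeasurableSet S := hBset.inter measurableSet_Ici
    have h2 : ENNReal.ofReal (∫ y in S, g y) ≤ ∫⁻ y in S, ENNReal.ofReal (g y) := by
      by_cases hint : Integrable g (volume.restrict S)
      · exact (ofReal_integral_eq_lintegral_ofReal hint
          (Eventually.of_forall fun y => hg_nn y)).le
      · rw [integral_undef hint]
        simp
    have h3 : ∫⁻ y in S, ENNReal.ofReal (g y) ≤ ∫⁻ _ in S, M := by
      refine setLIntegral_mono measurable_const fun y hy => ?_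
      have hyR : y ∈ Set.Ici R := le_of_lt hy.1.2.1
      exact le_iSup₂ (f := fun s (_ : s ∈ Set.Ici R) => ENNReal.ofReal (g s)) y hyR
    have h4 : (∫⁻ _ in S, M) = M * volume S := by
      rw [setLIntegral_const]
    have h5 : volume S ≤ volume (B ∩ Set.Ioc R (2*R)) :=
      measure_mono Set.inter_subset_left
    calc μY (B ∩ Set.Ioc R (2*R)) = ENNReal.ofReal (∫ y in S, g y) := h1
      _ ≤ ∫⁻ y in S, ENNReal.ofReal (g y) := h2
      _ ≤ ∫⁻ _ in S, M := h3
      _ = M * volume S := h4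
      _ ≤ M * volume (B ∩ Set.Ioc R (2*R)) := mul_le_mul_right h5 _
  -- express the second event via the product measure
  have hmap : P.map (fun ω => (Y ω, X ω)) = μY.prod μX :=
    (indepFun_iff_map_prod_eq_prod_map_map hY.aemeasurable hX.aemeasurable).mp hindep.symm
  set S' : Set (ℝ × ℝ) := {p : ℝ × ℝ | R < p.1 ∧ p.1 ≤ 2*R ∧ 2*R - p.1 < p.2} with hS'def
  have hS'meas : MeasurableSet S' := by
    apply MeasurableSet.inter (measurableSet_lt measurable_const measurable_fst)
    apply MeasurableSet.inter (measurableSet_le measurable_fst measurable_const)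
    exact measurableSet_lt (measurable_const.sub measurable_fst) measurable_snd
  have hev : {ω | R < Y ω ∧ Y ω ≤ 2*R ∧ 2*R - Y ω < X ω}
      = (fun ω => (Y ω, X ω)) ⁻¹' S' := rfl
  have hPB : P {ω | R < Y ω ∧ Y ω ≤ 2*R ∧ 2*R - Y ω < X ω} = (μY.prod μX) S' := by
    rw [hev, ← Measure.map_apply (hY.prodMk hX) hS'meas, hmap]
  have hslice : ∀ y : ℝ, μX (Prod.mk y ⁻¹' S') =
      Set.indicator (Set.Ioc R (2*R)) (fun y => μX (Set.Ioi (2*R - y))) y := by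
    intro y
    by_cases hy : y ∈ Set.Ioc R (2*R)
    · rw [Set.indicator_of_mem hy]
      congr 1
      ext x
      simp only [hS'def, Set.mem_preimage, Set.mem_setOf_eq, Set.mem_Ioi]
      exact ⟨fun h => h.2.2, fun h => ⟨hy.1, hy.2, h⟩⟩
    · rw [Set.indicator_of_notMem hy]
      have hempty : Prod.mk y ⁻¹' S' = (∅ : Set ℝ) := by
        ext x
        simp only [hS'def, Set.mem_preimage, Set.mem_setOf_eq, Set.mem_empty_iff_false,
          iff_false]
        rintro ⟨h1, h2, _⟩
        exact hy ⟨h1, h2⟩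
      rw [hempty, measure_empty]
  have hprod : (μY.prod μX) S' = ∫⁻ y in Set.Ioc R (2*R), μX (Set.Ioi (2*R - y)) ∂μY := by
    rw [Measure.prod_apply hS'meas]
    simp_rw [hslice]
    rw [lintegral_indicator measurableSet_Ioc]
  -- bound the lintegral using key
  have hbound : ∫⁻ y in Set.Ioc R (2*R), μX (Set.Ioi (2*R - y)) ∂μY ≤
      M * ∫⁻ y in Set.Ioc R (2*R), μX (Set.Ioi (2*R - y)) := by
    calc ∫⁻ y in Set.Ioc R (2*R), μX (Set.Ioi (2*R - y)) ∂μY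
        ≤ ∫⁻ y, μX (Set.Ioi (2*R - y)) ∂(M • (volume.restrict (Set.Ioc R (2*R)))) :=
          lintegral_mono' key le_rfl
      _ = M * ∫⁻ y in Set.Ioc R (2*R), μX (Set.Ioi (2*R - y)) := lintegral_smul_measure _ _
  -- change of variables t = 2R - y
  have hmp : MeasurePreserving (fun y : ℝ => 2*R - y) volume volume :=
    Measure.measurePreserving_sub_left volume (2*R)
  have hemb : MeasurableEmbedding (fun y : ℝ => 2*R - y) :=
    (MeasurableEquiv.subLeft (2*R)).measurableEmbedding
  have hpre : (fun y : ℝ => 2*R - y) ⁻¹' (Set.Ico 0 R) = Set.Ioc R (2*R) := by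
    ext y
    simp only [Set.mem_preimage, Set.mem_Ico, Set.mem_Ioc]
    constructor <;> intro h <;> constructor <;> linarith [h.1, h.2]
  have hcov : ∫⁻ y in Set.Ioc R (2*R), μX (Set.Ioi (2*R - y)) =
      ∫⁻ t in Set.Ico 0 R, μX (Set.Ioi t) := by
    rw [← hpre]
    exact hmp.setLIntegral_comp_preimage_emb hemb (fun t => μX (Set.Ioi t)) (Set.Ico 0 R)
  -- extend to Ioi 0 and apply layer cake
  have hext : ∫⁻ t in Set.Ico 0 R, μX (Set.Ioi t) ≤ ∫⁻ t in Set.Ioi 0, μX (Set.Ioi t) := by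
    calc ∫⁻ t in Set.Ico 0 R, μX (Set.Ioi t) ≤ ∫⁻ t in Set.Ici 0, μX (Set.Ioi t) :=
          lintegral_mono_set Set.Ico_subset_Ici_self
      _ = ∫⁻ t in Set.Ioi 0, μX (Set.Ioi t) :=
          setLIntegral_congr Ioi_ae_eq_Ici.symm
  have hlayer : ∫⁻ t in Set.Ioi 0, μX (Set.Ioi t) = ENNReal.ofReal (∫ ω, X ω ∂P) := by
    have h1 : ∀ t : ℝ, μX (Set.Ioi t) = P {ω | t < X ω} := by
      intro t
      rw [hμXdef, Measure.map_apply hX measurableSet_Ioi]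
      rfl
    simp_rw [h1]
    rw [← lintegral_eq_lintegral_meas_lt P hXnn hX.aemeasurable,
      ofReal_integral_eq_lintegral_ofReal hXint hXnn]
  calc P {ω | R < Y ω ∧ Y ω ≤ 2*R ∧ 2*R - Y ω < X ω}
      = (μY.prod μX) S' := hPB
    _ = ∫⁻ y in Set.Ioc R (2*R), μX (Set.Ioi (2*R - y)) ∂μY := hprod
    _ ≤ M * ∫⁻ y in Set.Ioc R (2*R), μX (Set.Ioi (2*R - y)) := hbound
    _ = M * ∫⁻ t in Set.Ico 0 R, μX (Set.Ioi t) := by rw [hcov]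
    _ ≤ M * ∫⁻ t in Set.Ioi 0, μX (Set.Ioi t) := mul_le_mul_right hext _
    _ = M * ENNReal.ofReal (∫ ω, X ω ∂P) := by rw [hlayer]
end

section
/- Let (A_i)_{i≥1} be a sequence of independent, identically distributed nonnegative random variables whose common law has a bounded continuous density a : (0,∞) → [0,∞) satisfying lim_{r→∞} r^{1+q} a(r) = K for some constants q > 0 and K > 0. Let m ≥ 1 and let w_1, …, w_m ≥ 0 be not all zero. Then the sum S = Σ_{j=1}^m w_j A_j has a continuous density a_w on (0,∞), and lim_{r→∞} r^{1+q} a_w(r) = K · Σ_{j=1}^m w_j^q (with the convention 0^q = 0). -/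
open MeasureTheory ProbabilityTheory Filter

open scoped ENNReal Convolution

namespace Stmt13

/-- A "nice" density on `(0,∞)` with tail constant `KK` for exponent `q`. -/
structure Nice (f : ℝ → ℝ) (q KK : ℝ) : Prop where
  meas : Measurable f
  nn : ∀ r, 0 ≤ f r
  bdd : ∃ M, ∀ r, f r ≤ M
  zero : ∀ r ≤ (0:ℝ), f r = 0
  cont : ContinuousOn f (Set.Ioi 0)
  integ : Integrable f
  int_one : ∫ r, f r = 1
  tail : Tendsto (fun r => r ^ (1+q) * f r) atTop (nhds KK)

noncomputable def dens (f : ℝ → ℝ) : Measure ℝ :=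
  volume.withDensity (fun x => ENNReal.ofReal (f x))

lemma dens_apply {f : ℝ → ℝ} (hf : Integrable f) (hnn : ∀ r, 0 ≤ f r)
    {B : Set ℝ} (hB : MeasurableSet B) :
    dens f B = ENNReal.ofReal (∫ x in B, f x) := by
  rw [dens, withDensity_apply _ hB,
    ← ofReal_integral_eq_lintegral_ofReal hf.integrableOn (ae_of_all _ hnn)]

lemma lintegral_scale {c : ℝ} (hc : 0 < c) (G : ℝ → ℝ≥0∞) (hG : Measurable G) :
    ∫⁻ x, G x = ENNReal.ofReal c * ∫⁻ y, G (c * y) := by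
  have hmap : Measure.map (fun y : ℝ => c * y) volume
      = ENNReal.ofReal |c⁻¹| • (volume : Measure ℝ) := Real.map_volume_mul_left hc.ne'
  have h1 : ∫⁻ y, G (c * y) = ∫⁻ x, G x ∂(Measure.map (fun y : ℝ => c * y) volume) :=
    (lintegral_map hG (measurable_const_mul c)).symm
  rw [h1, hmap, lintegral_smul_measure, smul_eq_mul, ← mul_assoc, ← ENNReal.ofReal_mul hc.le,
    abs_of_pos (inv_pos.mpr hc), mul_inv_cancel₀ hc.ne', ENNReal.ofReal_one, one_mul]

lemma dens_scale {f : ℝ → ℝ} (hf_meas : Measurable f)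
    {c : ℝ} (hc : 0 < c) :
    Measure.map (fun x => c * x) (dens f)
      = dens (fun r => (1/c) * f (r/c)) := by
  ext B hB
  have hpre : MeasurableSet ((fun x : ℝ => c * x) ⁻¹' B) := hB.preimage (measurable_const_mul c)
  rw [Measure.map_apply (measurable_const_mul c) hB, dens, dens,
    withDensity_apply _ hpre, withDensity_apply _ hB,
    ← lintegral_indicator hpre _, ← lintegral_indicator hB _]
  have hGmeas : Measurable (B.indicator (fun x : ℝ => ENNReal.ofReal ((1/c) * f (x/c)))) := by
    apply Measurable.indicator _ hB
    exact ENNReal.measurable_ofReal.comp (measurable_const.mul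
      (hf_meas.comp (measurable_id.div_const c)))
  rw [lintegral_scale hc _ hGmeas]
  have key : ∀ y : ℝ, ENNReal.ofReal c *
      (B.indicator (fun x : ℝ => ENNReal.ofReal ((1/c) * f (x/c))) (c * y))
      = ((fun x : ℝ => c * x) ⁻¹' B).indicator (fun y => ENNReal.ofReal (f y)) y := by
    intro y
    by_cases hy : c * y ∈ B
    · rw [Set.indicator_of_mem hy, Set.indicator_of_mem (by exact hy)]
      rw [mul_div_cancel_left₀ _ hc.ne', ENNReal.ofReal_mul (by positivity), ← mul_assoc,
        ← ENNReal.ofReal_mul hc.le]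
      rw [mul_one_div, div_self hc.ne', ENNReal.ofReal_one, one_mul]
    · rw [Set.indicator_of_notMem hy, Set.indicator_of_notMem (by exact hy), mul_zero]
  rw [← lintegral_congr key]
  exact lintegral_const_mul _ (hGmeas.comp (measurable_const_mul c))

lemma scale_nice {f : ℝ → ℝ} {q KK c : ℝ} (hq : 0 < q) (hc : 0 < c)
    (hf : Nice f q KK) : Nice (fun r => (1/c) * f (r/c)) q (c ^ q * KK) := by
  obtain ⟨M, hM⟩ := hf.bdd
  constructor
  · exact measurable_const.mul (hf.meas.comp (measurable_id.div_const c))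
  · intro r; exact mul_nonneg (by positivity) (hf.nn _)
  · refine ⟨(1/c) * M, fun r => ?_⟩
    exact mul_le_mul_of_nonneg_left (hM _) (by positivity)
  · intro r hr
    rw [hf.zero _ (div_nonpos_iff.mpr (Or.inr ⟨hr, hc.le⟩)), mul_zero]
  · apply ContinuousOn.mul continuousOn_const
    apply hf.cont.comp (continuousOn_id.div_const c)
    intro x hx
    exact Set.mem_Ioi.mpr (div_pos hx hc)
  · exact (hf.integ.comp_div hc.ne').const_mul _
  · rw [integral_const_mul, Measure.integral_comp_div f c, abs_of_pos hc, smul_eq_mul, hf.int_one]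
    field_simp
  · have h1 : Tendsto (fun r : ℝ => r / c) atTop atTop := tendsto_id.atTop_div_const hc
    have h2 : Tendsto (fun r : ℝ => c ^ q * ((r/c) ^ (1+q) * f (r/c))) atTop
        (nhds (c ^ q * KK)) := (hf.tail.comp h1).const_mul _
    refine h2.congr' ?_
    filter_upwards [eventually_gt_atTop 0] with r hr
    have hrc : (0:ℝ) < r / c := div_pos hr hc
    have hr1 : r ^ (1+q) = c ^ (1+q) * (r/c) ^ (1+q) := by
      rw [← Real.mul_rpow hc.le hrc.le, mul_div_cancel₀ _ hc.ne']
    have hc1 : c ^ (1+q) = c * c ^ q := by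
      rw [Real.rpow_add hc, Real.rpow_one]
    rw [hr1, hc1]
    field_simp

lemma tail_nonneg {g : ℝ → ℝ} {q Kg : ℝ} (hg_nn : ∀ r, 0 ≤ g r)
    (hg_tail : Tendsto (fun r => r ^ (1+q) * g r) atTop (nhds Kg)) : 0 ≤ Kg := by
  refine ge_of_tendsto hg_tail ?_
  filter_upwards [eventually_ge_atTop (0:ℝ)] with r hr
  exact mul_nonneg (Real.rpow_nonneg hr _) (hg_nn r)

/-- The key dominated convergence step: the contribution of `y ≤ r/2` to the convolution,
scaled by `r^(1+q)`, tends to `Kg`. -/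
lemma tail_piece {f g : ℝ → ℝ} {q Kg : ℝ} (hq : 0 < q)
    (hf_meas : Measurable f) (hf_nn : ∀ r, 0 ≤ f r) (hf_zero : ∀ r ≤ (0:ℝ), f r = 0)
    (hf_int : Integrable f) (hf_one : ∫ r, f r = 1)
    (hg_meas : Measurable g) (hg_nn : ∀ r, 0 ≤ g r)
    (hg_tail : Tendsto (fun r => r ^ (1+q) * g r) atTop (nhds Kg)) :
    Tendsto (fun r => ∫ y, Set.indicator (Set.Iic (r/2))
      (fun y => r ^ (1+q) * (f y * g (r - y))) y) atTop (nhds Kg) := by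
  have hKg : 0 ≤ Kg := tail_nonneg hg_nn hg_tail
  obtain ⟨R₀, hR₀⟩ := eventually_atTop.mp (hg_tail.eventually
    (eventually_le_nhds (lt_add_one Kg)))
  set R : ℝ := max R₀ 1 with hR_def
  have hRpos : (0:ℝ) < R := lt_of_lt_of_le one_pos (le_max_right _ _)
  have hRbound : ∀ x ≥ R, x ^ (1+q) * g x ≤ Kg + 1 :=
    fun x hx => hR₀ x (le_trans (le_max_left _ _) hx)
  set C : ℝ := (Kg + 1) * 2 ^ (1+q) with hC_def
  have hCnn : 0 ≤ C := by positivity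
  have h1q : (0:ℝ) ≤ 1 + q := by linarith
  have main := tendsto_integral_filter_of_dominated_convergence
    (μ := (volume : Measure ℝ)) (l := atTop)
    (F := fun r => Set.indicator (Set.Iic (r/2))
      (fun y => r ^ (1+q) * (f y * g (r - y))))
    (f := fun y => Kg * f y) (bound := fun y => C * f y)
    ?_ ?_ ?_ ?_
  · have : ∫ y, Kg * f y = Kg := by rw [integral_const_mul, hf_one, mul_one]
    rwa [this] at main
  · refine Eventually.of_forall fun r => ?_
    exact ((measurable_const.mul (hf_meas.mul
      (hg_meas.comp (measurable_const.sub measurable_id)))).indicator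
      measurableSet_Iic).aestronglyMeasurable
  · filter_upwards [eventually_ge_atTop (2*R)] with r hr
    refine ae_of_all _ fun y => ?_
    have hrpos : (0:ℝ) < r := lt_of_lt_of_le (by linarith) hr
    by_cases hy : y ∈ Set.Iic (r/2)
    · rw [Set.indicator_of_mem hy]
      have hy' : y ≤ r/2 := hy
      set s : ℝ := r - y with hs_def
      have hsR : R ≤ s := by
        have : r/2 ≤ s := by simp only [hs_def]; linarith
        linarith [le_trans (by linarith : R ≤ r/2) this]
      have hspos : (0:ℝ) < s := lt_of_lt_of_le hRpos hsR
      have hnn_val : 0 ≤ r ^ (1+q) * (f y * g s) := by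
        exact mul_nonneg (Real.rpow_nonneg hrpos.le _) (mul_nonneg (hf_nn y) (hg_nn s))
      rw [Real.norm_eq_abs, abs_of_nonneg hnn_val]
      have h2 : r ^ (1+q) ≤ (2*s) ^ (1+q) :=
        Real.rpow_le_rpow hrpos.le (by linarith) h1q
      have h3 : (2*s) ^ (1+q) = 2 ^ (1+q) * s ^ (1+q) :=
        Real.mul_rpow (by norm_num) hspos.le
      have hg' : s ^ (1+q) * g s ≤ Kg + 1 := hRbound s hsR
      calc r ^ (1+q) * (f y * g s)
          ≤ (2 ^ (1+q) * s ^ (1+q)) * (f y * g s) := by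
            refine mul_le_mul_of_nonneg_right ?_ (mul_nonneg (hf_nn y) (hg_nn s))
            rw [← h3]; exact h2
        _ = (2 ^ (1+q) * f y) * (s ^ (1+q) * g s) := by ring
        _ ≤ (2 ^ (1+q) * f y) * (Kg + 1) := by
            exact mul_le_mul_of_nonneg_left hg' (mul_nonneg (by positivity) (hf_nn y))
        _ = C * f y := by rw [hC_def]; ring
    · rw [Set.indicator_of_notMem hy, norm_zero]
      exact mul_nonneg hCnn (hf_nn y)
  · exact hf_int.const_mul C
  · refine ae_of_all _ fun y => ?_
    by_cases hfy : f y = 0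
    · have hzero : ∀ r : ℝ, Set.indicator (Set.Iic (r/2))
          (fun y => r ^ (1+q) * (f y * g (r - y))) y = 0 := by
        intro r
        by_cases hy : y ∈ Set.Iic (r/2)
        · rw [Set.indicator_of_mem hy, hfy, zero_mul, mul_zero]
        · rw [Set.indicator_of_notMem hy]
      have hlim : Tendsto (fun _ : ℝ => (0:ℝ)) atTop (nhds (Kg * f y)) := by
        rw [hfy, mul_zero]; exact tendsto_const_nhds
      exact hlim.congr fun r => (hzero r).symm
    · have hy_pos : 0 < y := by
        by_contra hcon
        exact hfy (hf_zero y (le_of_not_gt hcon))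
      have t1 : Tendsto (fun r : ℝ => r - y) atTop atTop :=
        tendsto_atTop_add_const_right atTop (-y) tendsto_id
      have t2 : Tendsto (fun r : ℝ => (r - y) ^ (1+q) * g (r - y)) atTop (nhds Kg) :=
        hg_tail.comp t1
      have t3 : Tendsto (fun r : ℝ => r / (r - y)) atTop (nhds 1) := by
        have hdiv : Tendsto (fun r : ℝ => y / (r - y)) atTop (nhds 0) :=
          Tendsto.div_atTop tendsto_const_nhds t1
        have h4 : Tendsto (fun r : ℝ => 1 + y / (r - y)) atTop (nhds (1 + 0)) :=
          tendsto_const_nhds.add hdiv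
        rw [add_zero] at h4
        refine h4.congr' ?_
        filter_upwards [eventually_gt_atTop y] with r hr
        have hne : r - y ≠ 0 := by intro h; linarith [sub_eq_zero.mp h]
        field_simp
        ring
      have t4 : Tendsto (fun r : ℝ => (r / (r - y)) ^ (1+q)) atTop (nhds 1) := by
        have hcont := (Real.continuousAt_rpow_const 1 (1+q) (Or.inl one_ne_zero)).tendsto
        have h5 := hcont.comp t3
        rwa [Real.one_rpow] at h5
      have tcomb : Tendsto (fun r : ℝ => f y *
          ((r / (r - y)) ^ (1+q) * ((r - y) ^ (1+q) * g (r - y)))) atTop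
          (nhds (f y * (1 * Kg))) := tendsto_const_nhds.mul (t4.mul t2)
      rw [show f y * (1 * Kg) = Kg * f y by ring] at tcomb
      refine tcomb.congr' ?_
      filter_upwards [eventually_ge_atTop (2*y), eventually_gt_atTop (0:ℝ)] with r hr hrpos
      have hy_mem : y ∈ Set.Iic (r/2) := by simp only [Set.mem_Iic]; linarith
      have hsub : (0:ℝ) < r - y := by linarith
      rw [Set.indicator_of_mem hy_mem]
      have hre : r ^ (1+q) = (r / (r - y)) ^ (1+q) * (r - y) ^ (1+q) := by
        rw [← Real.mul_rpow (by positivity) hsub.le, div_mul_cancel₀ _ hsub.ne']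
      rw [eq_comm, hre]
      ring

noncomputable def convd (f g : ℝ → ℝ) : ℝ → ℝ := fun r => ∫ y, f y * g (r - y)

lemma integrand_integrable {f g : ℝ → ℝ} (hf_int : Integrable f)
    (hf_meas : Measurable f) (hf_nn : ∀ r, 0 ≤ f r)
    (hg_meas : Measurable g) (hg_nn : ∀ r, 0 ≤ g r) {Mg : ℝ}
    (hg_bdd : ∀ r, g r ≤ Mg) (r : ℝ) :
    Integrable (fun y => f y * g (r - y)) := by
  refine Integrable.mono' (hf_int.mul_const Mg) ?_ (ae_of_all _ fun y => ?_)
  · exact (hf_meas.mul (hg_meas.comp (measurable_const.sub measurable_id))).aestronglyMeasurable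
  · rw [Real.norm_eq_abs, abs_of_nonneg (mul_nonneg (hf_nn y) (hg_nn _))]
    exact mul_le_mul_of_nonneg_left (hg_bdd _) (hf_nn y)

lemma convd_eq_convolution (f g : ℝ → ℝ) :
    convd f g = (f ⋆[ContinuousLinearMap.lsmul ℝ ℝ, volume] g) := by
  funext r
  rw [convd, convolution_def]
  simp [smul_eq_mul]

lemma convd_integrable {f g : ℝ → ℝ} (hf_int : Integrable f) (hg_int : Integrable g) :
    Integrable (convd f g) := by
  rw [convd_eq_convolution]
  exact hf_int.integrable_convolution _ hg_int

lemma convd_int_one {f g : ℝ → ℝ} (hf_int : Integrable f) (hg_int : Integrable g)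
    (hf_one : ∫ r, f r = 1) (hg_one : ∫ r, g r = 1) :
    ∫ r, convd f g r = 1 := by
  rw [convd_eq_convolution]
  rw [integral_convolution _ hf_int hg_int, hf_one, hg_one]
  simp

lemma convd_meas {f g : ℝ → ℝ} (hf_meas : Measurable f) (hg_meas : Measurable g) :
    Measurable (convd f g) := by
  have : StronglyMeasurable (fun p : ℝ × ℝ => f p.2 * g (p.1 - p.2)) :=
    ((hf_meas.comp measurable_snd).mul
      (hg_meas.comp (measurable_fst.sub measurable_snd))).stronglyMeasurable
  exact this.integral_prod_right'.measurable

lemma convd_nonneg {f g : ℝ → ℝ} (hf_nn : ∀ r, 0 ≤ f r) (hg_nn : ∀ r, 0 ≤ g r) (r : ℝ) :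
    0 ≤ convd f g r :=
  integral_nonneg fun y => mul_nonneg (hf_nn y) (hg_nn _)

lemma convd_zero {f g : ℝ → ℝ} (hf_zero : ∀ r ≤ (0:ℝ), f r = 0)
    (hg_zero : ∀ r ≤ (0:ℝ), g r = 0) : ∀ r ≤ (0:ℝ), convd f g r = 0 := by
  intro r hr
  rw [convd]
  have : ∀ y : ℝ, f y * g (r - y) = 0 := by
    intro y
    rcases le_or_gt y 0 with hy | hy
    · rw [hf_zero y hy, zero_mul]
    · rw [hg_zero (r - y) (by linarith), mul_zero]
  simp only [this, integral_zero]

lemma convd_bdd {f g : ℝ → ℝ} (hf_int : Integrable f)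
    (hf_meas : Measurable f) (hf_nn : ∀ r, 0 ≤ f r) (hf_one : ∫ r, f r = 1)
    (hg_meas : Measurable g) (hg_nn : ∀ r, 0 ≤ g r) {Mg : ℝ}
    (hg_bdd : ∀ r, g r ≤ Mg) (r : ℝ) : convd f g r ≤ Mg := by
  have h1 : convd f g r ≤ ∫ y, f y * Mg := by
    refine integral_mono (integrand_integrable hf_int hf_meas hf_nn hg_meas hg_nn hg_bdd r)
      (hf_int.mul_const Mg) fun y => ?_
    exact mul_le_mul_of_nonneg_left (hg_bdd _) (hf_nn y)
  rw [integral_mul_const, hf_one, one_mul] at h1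
  exact h1

lemma convd_cont {f g : ℝ → ℝ} (hf_int : Integrable f)
    (hf_meas : Measurable f) (hf_nn : ∀ r, 0 ≤ f r)
    (hg_meas : Measurable g) (hg_nn : ∀ r, 0 ≤ g r) {Mg : ℝ}
    (hg_bdd : ∀ r, g r ≤ Mg) (hg_zero : ∀ r ≤ (0:ℝ), g r = 0)
    (hg_cont : ContinuousOn g (Set.Ioi 0)) :
    ContinuousOn (convd f g) (Set.Ioi 0) := by
  intro r0 _
  have hae : ∀ᵐ y : ℝ ∂(volume : Measure ℝ), y ≠ r0 := by
    rw [ae_iff]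
    have : {y : ℝ | ¬ y ≠ r0} = {r0} := by ext y; simp
    rw [this]
    exact measure_singleton r0
  have key : Tendsto (fun r => ∫ y, f y * g (r - y)) (nhds r0)
      (nhds (∫ y, f y * g (r0 - y))) := by
    refine tendsto_integral_filter_of_dominated_convergence (bound := fun y => f y * Mg)
      ?_ ?_ (hf_int.mul_const Mg) ?_
    · refine Eventually.of_forall fun r => ?_
      exact (hf_meas.mul (hg_meas.comp
        (measurable_const.sub measurable_id))).aestronglyMeasurable
    · refine Eventually.of_forall fun r => ae_of_all _ fun y => ?_
      rw [Real.norm_eq_abs, abs_of_nonneg (mul_nonneg (hf_nn y) (hg_nn _))]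
      exact mul_le_mul_of_nonneg_left (hg_bdd _) (hf_nn y)
    · filter_upwards [hae] with y hy
      by_cases hfy : f y = 0
      · simp only [hfy, zero_mul]
        exact tendsto_const_nhds
      · rcases lt_trichotomy (r0 - y) 0 with hneg | hzero | hpos
        · have hev : ∀ᶠ r in nhds r0, f y * g (r - y) = f y * g (r0 - y) := by
            have hmem : r0 ∈ Set.Iio y := by simp only [Set.mem_Iio]; linarith
            filter_upwards [(isOpen_Iio (a := y)).eventually_mem hmem] with r hr
            rw [hg_zero (r - y) (by simp only [Set.mem_Iio] at hr; linarith),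
              hg_zero (r0 - y) hneg.le]
          exact Tendsto.congr' (hev.mono fun r h => h.symm) tendsto_const_nhds
        · exact absurd (sub_eq_zero.mp hzero).symm hy
        · have hcg : ContinuousAt g (r0 - y) :=
            hg_cont.continuousAt (isOpen_Ioi.mem_nhds hpos)
          have hsub : Tendsto (fun r : ℝ => r - y) (nhds r0) (nhds (r0 - y)) :=
            (continuous_id.sub continuous_const).tendsto r0
          exact tendsto_const_nhds.mul (hcg.tendsto.comp hsub)
  have hca : ContinuousAt (convd f g) r0 := key
  exact hca.continuousWithinAt

lemma sub_flip (f g : ℝ → ℝ) (r : ℝ) :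
    ∫ y in Set.Ioi (r/2), f y * g (r - y) = ∫ x in Set.Iio (r/2), f (r - x) * g x := by
  rw [← integral_indicator measurableSet_Ioi, ← integral_indicator measurableSet_Iio]
  have hsub := integral_sub_left_eq_self
    (fun x => Set.indicator (Set.Ioi (r/2)) (fun y => f y * g (r - y)) x)
    (volume : Measure ℝ) r
  rw [← hsub]
  congr 1
  funext x
  by_cases hx : x < r/2
  · rw [Set.indicator_of_mem (by simp only [Set.mem_Ioi]; linarith),
      Set.indicator_of_mem (by simpa using hx), sub_sub_cancel]
  · rw [Set.indicator_of_notMem (by simp only [Set.mem_Ioi]; push_neg; linarith),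
      Set.indicator_of_notMem (by simpa using hx)]

lemma convd_tail {f g : ℝ → ℝ} {q Kf Kg Mg : ℝ} (hq : 0 < q)
    (hf_meas : Measurable f) (hf_nn : ∀ r, 0 ≤ f r) (hf_zero : ∀ r ≤ (0:ℝ), f r = 0)
    (hf_int : Integrable f) (hf_one : ∫ r, f r = 1)
    (hf_tail : Tendsto (fun r => r ^ (1+q) * f r) atTop (nhds Kf))
    (hg_meas : Measurable g) (hg_nn : ∀ r, 0 ≤ g r) (hg_zero : ∀ r ≤ (0:ℝ), g r = 0)
    (hg_int : Integrable g) (hg_one : ∫ r, g r = 1)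
    (hg_tail : Tendsto (fun r => r ^ (1+q) * g r) atTop (nhds Kg))
    (hg_bdd : ∀ r, g r ≤ Mg) :
    Tendsto (fun r => r ^ (1+q) * convd f g r) atTop (nhds (Kf + Kg)) := by
  have hA := tail_piece hq hf_meas hf_nn hf_zero hf_int hf_one hg_meas hg_nn hg_tail
  have hB := tail_piece hq hg_meas hg_nn hg_zero hg_int hg_one hf_meas hf_nn hf_tail
  have hsum := hA.add hB
  rw [show Kg + Kf = Kf + Kg by ring] at hsum
  refine hsum.congr fun r => ?_
  have e1 : ∫ y, Set.indicator (Set.Iic (r/2))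
      (fun y => r ^ (1+q) * (f y * g (r - y))) y
      = r ^ (1+q) * ∫ y in Set.Iic (r/2), f y * g (r - y) := by
    rw [integral_indicator measurableSet_Iic, integral_const_mul]
  have e2 : ∫ x, Set.indicator (Set.Iic (r/2))
      (fun x => r ^ (1+q) * (g x * f (r - x))) x
      = r ^ (1+q) * ∫ y in Set.Ioi (r/2), f y * g (r - y) := by
    rw [integral_indicator measurableSet_Iic, integral_const_mul, sub_flip f g r]
    congr 1
    rw [← setIntegral_congr_set MeasureTheory.Iio_ae_eq_Iic]
    congr 1
    funext x
    ring
  rw [e1, e2, ← mul_add, ← Set.compl_Iic,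
    integral_add_compl measurableSet_Iic
      (integrand_integrable hf_int hf_meas hf_nn hg_meas hg_nn hg_bdd r) (μ := volume)
      (f := fun y => f y * g (r - y))]
  rfl

lemma conv_dens {Ω : Type*} [MeasurableSpace Ω] (P : Measure Ω) [IsProbabilityMeasure P]
    {X Y : Ω → ℝ} (hX : Measurable X) (hY : Measurable Y) (hXY : IndepFun X Y P)
    {f g : ℝ → ℝ} (hf_meas : Measurable f) (hf_nn : ∀ r, 0 ≤ f r) (hf_int : Integrable f)
    (hg_meas : Measurable g) (hg_nn : ∀ r, 0 ≤ g r) {Mg : ℝ} (hg_bdd : ∀ r, g r ≤ Mg)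
    (hfd : Measure.map X P = dens f) (hgd : Measure.map Y P = dens g) :
    Measure.map (fun ω => X ω + Y ω) P = dens (convd f g) := by
  have hcomp : (fun ω => X ω + Y ω)
      = ((fun p : ℝ × ℝ => p.1 + p.2) ∘ fun ω => (X ω, Y ω)) := rfl
  rw [hcomp, ← Measure.map_map measurable_add (hX.prodMk hY),
    (indepFun_iff_map_prod_eq_prod_map_map hX.aemeasurable hY.aemeasurable).mp hXY,
    hfd, hgd]
  set F : ℝ → ℝ≥0∞ := fun x => ENNReal.ofReal (f x) with hF_def
  have hFmeas : Measurable F := ENNReal.measurable_ofReal.comp hf_meas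
  haveI hPf : IsProbabilityMeasure (dens f) := hfd ▸ Measure.isProbabilityMeasure_map hX.aemeasurable
  haveI hPg : IsProbabilityMeasure (dens g) := hgd ▸ Measure.isProbabilityMeasure_map hY.aemeasurable
  ext B hB
  set S : Set (ℝ × ℝ) := (fun p : ℝ × ℝ => p.1 + p.2) ⁻¹' B with hS_def
  have hS : MeasurableSet S := hB.preimage measurable_add
  set ψ : ℝ → ℝ → ℝ≥0∞ :=
    fun x s => B.indicator (fun _ => (1:ℝ≥0∞)) s * ENNReal.ofReal (g (s - x)) with hψ_def
  have hψmeas : Measurable (fun p : ℝ × ℝ => ψ p.1 p.2) := by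
    refine Measurable.mul ?_ ?_
    · exact (measurable_one.indicator hB).comp measurable_snd
    · exact ENNReal.measurable_ofReal.comp (hg_meas.comp (measurable_snd.sub measurable_fst))
  have claim1 : ∀ x : ℝ, dens g ((fun y => x + y) ⁻¹' B) = ∫⁻ s, ψ x s := by
    intro x
    have hpre : MeasurableSet ((fun y : ℝ => x + y) ⁻¹' B) :=
      hB.preimage (measurable_const_add x)
    rw [dens, withDensity_apply _ hpre, ← lintegral_indicator hpre _,
      ← lintegral_add_left_eq_self (fun s => ψ x s) x]
    refine lintegral_congr fun y => ?_
    by_cases h : x + y ∈ B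
    · rw [Set.indicator_of_mem (Set.mem_preimage.mpr h), hψ_def]
      simp only [Set.indicator_of_mem h, one_mul, add_sub_cancel_left]
    · rw [Set.indicator_of_notMem (fun hc => h (Set.mem_preimage.mp hc)), hψ_def]
      simp only [Set.indicator_of_notMem h, zero_mul]
  calc Measure.map (fun p : ℝ × ℝ => p.1 + p.2) ((dens f).prod (dens g)) B
      = ((dens f).prod (dens g)) S := Measure.map_apply measurable_add hB
    _ = ∫⁻ x, dens g (Prod.mk x ⁻¹' S) ∂(dens f) := Measure.prod_apply hS
    _ = ∫⁻ x, (∫⁻ s, ψ x s) ∂(dens f) := by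
        refine lintegral_congr fun x => ?_
        rw [show Prod.mk x ⁻¹' S = (fun y : ℝ => x + y) ⁻¹' B from rfl]
        exact claim1 x
    _ = ∫⁻ x, F x * (∫⁻ s, ψ x s) := by
        rw [dens, lintegral_withDensity_eq_lintegral_mul _ hFmeas hψmeas.lintegral_prod_right']
        rfl
    _ = ∫⁻ x, ∫⁻ s, F x * ψ x s := by
        refine lintegral_congr fun x => ?_
        exact (lintegral_const_mul (F x) (hψmeas.comp measurable_prodMk_left)).symm
    _ = ∫⁻ s, ∫⁻ x, F x * ψ x s := by
        refine lintegral_lintegral_swap ?_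
        exact ((hFmeas.comp measurable_fst).mul hψmeas).aemeasurable
    _ = ∫⁻ s, B.indicator (fun _ => (1:ℝ≥0∞)) s * ∫⁻ x, F x * ENNReal.ofReal (g (s - x)) := by
        refine lintegral_congr fun s => ?_
        have hmx : Measurable (fun x : ℝ => F x * ENNReal.ofReal (g (s - x))) :=
          hFmeas.mul (ENNReal.measurable_ofReal.comp
            (hg_meas.comp (measurable_const.sub measurable_id)))
        rw [← lintegral_const_mul _ hmx]
        refine lintegral_congr fun x => ?_
        rw [hψ_def]
        ring
    _ = ∫⁻ s, B.indicator (fun s => ENNReal.ofReal (convd f g s)) s := by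
        refine lintegral_congr fun s => ?_
        have hinner : ∫⁻ x, F x * ENNReal.ofReal (g (s - x))
            = ENNReal.ofReal (convd f g s) := by
          have h1 : ∀ x : ℝ, F x * ENNReal.ofReal (g (s - x))
              = ENNReal.ofReal (f x * g (s - x)) :=
            fun x => (ENNReal.ofReal_mul (hf_nn x)).symm
          rw [lintegral_congr h1, ← ofReal_integral_eq_lintegral_ofReal
            (integrand_integrable hf_int hf_meas hf_nn hg_meas hg_nn hg_bdd s)
            (ae_of_all _ fun y => mul_nonneg (hf_nn y) (hg_nn _))]
          rfl
        rw [hinner]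
        by_cases h : s ∈ B
        · rw [Set.indicator_of_mem h, Set.indicator_of_mem h, one_mul]
        · rw [Set.indicator_of_notMem h, Set.indicator_of_notMem h, zero_mul]
    _ = dens (convd f g) B := by
        rw [lintegral_indicator hB, dens, withDensity_apply _ hB]

/-- Full convolution step. -/
lemma conv_nice {Ω : Type*} [MeasurableSpace Ω] (P : Measure Ω) [IsProbabilityMeasure P]
    {X Y : Ω → ℝ} (hX : Measurable X) (hY : Measurable Y) (hXY : IndepFun X Y P)
    {f g : ℝ → ℝ} {q Kf Kg : ℝ} (hq : 0 < q)
    (hf : Nice f q Kf) (hg : Nice g q Kg)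
    (hfd : Measure.map X P = dens f) (hgd : Measure.map Y P = dens g) :
    Nice (convd f g) q (Kf + Kg) ∧
      Measure.map (fun ω => X ω + Y ω) P = dens (convd f g) := by
  obtain ⟨Mg, hMg⟩ := hg.bdd
  refine ⟨⟨convd_meas hf.meas hg.meas, convd_nonneg hf.nn hg.nn,
    ⟨Mg, convd_bdd hf.integ hf.meas hf.nn hf.int_one hg.meas hg.nn hMg⟩,
    convd_zero hf.zero hg.zero,
    convd_cont hf.integ hf.meas hf.nn hg.meas hg.nn hMg hg.zero hg.cont,
    convd_integrable hf.integ hg.integ,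
    convd_int_one hf.integ hg.integ hf.int_one hg.int_one,
    convd_tail hq hf.meas hf.nn hf.zero hf.integ hf.int_one hf.tail
      hg.meas hg.nn hg.zero hg.integ hg.int_one hg.tail hMg⟩,
    conv_dens P hX hY hXY hf.meas hf.nn hf.integ hg.meas hg.nn hMg hfd hgd⟩

end Stmt13

open Stmt13

/-- For i.i.d. nonnegative random variables whose common law has a bounded
continuous density `a` on `(0,∞)` with `r^{1+q}·a(r) → K > 0`, and nonnegative weights
`w₁,…,w_m` not all zero, the finite sum `S = Σ_{j<m} w_j A_j` has a continuous density `a_w`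
on `(0,∞)` and `r^{1+q}·a_w(r) → K·Σ_{j<m} w_j^q`. -/
theorem stmt_13 {Ω : Type*} [MeasurableSpace Ω] (P : Measure Ω) [IsProbabilityMeasure P]
    (A : ℕ → Ω → ℝ) (hmeas : ∀ i, Measurable (A i))
    (hindep : iIndepFun A P)
    (hident : ∀ i, Measure.map (A i) P = Measure.map (A 0) P)
    (hnn : ∀ i, ∀ᵐ ω ∂P, 0 ≤ A i ω)
    (a : ℝ → ℝ) (ha_meas : Measurable a) (ha_nn : ∀ r, 0 ≤ a r)
    (K₀ : ℝ) (ha_bdd : ∀ r, a r ≤ K₀)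
    (ha_cont : ContinuousOn a (Set.Ioi 0))
    (ha_dens : ∀ B : Set ℝ, MeasurableSet B →
      Measure.map (A 0) P B = ENNReal.ofReal (∫ r in B ∩ Set.Ioi 0, a r))
    (q K : ℝ) (hq : 0 < q) (hK : 0 < K)
    (ha_asymp : Tendsto (fun r : ℝ => r ^ (1 + q) * a r) atTop (nhds K))
    (m : ℕ) (hm : 1 ≤ m) (w : ℕ → ℝ) (hw : ∀ j, 0 ≤ w j)
    (hw_ne : ∃ j < m, 0 < w j) :
    ∃ aw : ℝ → ℝ, (∀ r, 0 ≤ aw r) ∧ ContinuousOn aw (Set.Ioi 0) ∧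
      (∀ B : Set ℝ, MeasurableSet B →
        Measure.map (fun ω => ∑ j ∈ Finset.range m, w j * A j ω) P B =
          ENNReal.ofReal (∫ r in B ∩ Set.Ioi 0, aw r)) ∧
      Tendsto (fun r : ℝ => r ^ (1 + q) * aw r) atTop
        (nhds (K * ∑ j ∈ Finset.range m, w j ^ q)) := by
  classical
  -- the base density
  set f0 : ℝ → ℝ := Set.indicator (Set.Ioi 0) a with hf0_def
  have hf0_meas : Measurable f0 := ha_meas.indicator measurableSet_Ioi
  have hf0_nn : ∀ r, 0 ≤ f0 r := fun r => Set.indicator_nonneg (fun x _ => ha_nn x) r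
  have hf0_eqon : Set.EqOn f0 a (Set.Ioi 0) := Set.eqOn_indicator
  -- integrability of a on (0,∞)
  have hmap_univ : Measure.map (A 0) P Set.univ = 1 := by
    haveI : IsProbabilityMeasure (Measure.map (A 0) P) :=
      Measure.isProbabilityMeasure_map (hmeas 0).aemeasurable
    exact measure_univ
  have huniv := ha_dens Set.univ MeasurableSet.univ
  rw [hmap_univ, Set.univ_inter] at huniv
  have ha_intOn : IntegrableOn a (Set.Ioi 0) := by
    by_contra hcon
    rw [integral_undef hcon] at huniv
    simp at huniv
  have hf0_int : Integrable f0 := ha_intOn.integrable_indicator measurableSet_Ioi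
  have hf0_one : ∫ r, f0 r = 1 := by
    rw [hf0_def, integral_indicator measurableSet_Ioi]
    exact ENNReal.ofReal_eq_one.mp huniv.symm
  have hf0_tail : Tendsto (fun r : ℝ => r ^ (1 + q) * f0 r) atTop (nhds K) := by
    refine ha_asymp.congr' ?_
    filter_upwards [eventually_gt_atTop (0:ℝ)] with r hr
    rw [hf0_def, Set.indicator_of_mem (Set.mem_Ioi.mpr hr)]
  have hf0_nice : Nice f0 q K := by
    refine ⟨hf0_meas, hf0_nn, ⟨max K₀ 0, fun r => ?_⟩, fun r hr => ?_,
      ha_cont.congr hf0_eqon, hf0_int, hf0_one, hf0_tail⟩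
    · by_cases h : r ∈ Set.Ioi 0
      · rw [hf0_def, Set.indicator_of_mem h]
        exact le_trans (ha_bdd r) (le_max_left _ _)
      · rw [hf0_def, Set.indicator_of_notMem h]
        exact le_max_right _ _
    · rw [hf0_def, Set.indicator_of_notMem (by simp only [Set.mem_Ioi]; linarith)]
  have hd0 : ∀ i, Measure.map (A i) P = dens f0 := by
    intro i
    rw [hident i]
    ext B hB
    rw [ha_dens B hB, dens_apply hf0_int hf0_nn hB, hf0_def,
      setIntegral_indicator measurableSet_Ioi]
  -- independence of the weighted variables
  have hiid : iIndepFun (fun i => fun ω => w i * A i ω) P := by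
    have := hindep.comp (fun i => fun x : ℝ => w i * x)
      (fun i => measurable_const_mul (w i))
    exact this
  have hmeas' : ∀ i, Measurable (fun ω => w i * A i ω) :=
    fun i => (hmeas i).const_mul (w i)
  -- main induction
  have main : ∀ n : ℕ, (∃ j < n, 0 < w j) →
      ∃ f : ℝ → ℝ, Nice f q (K * ∑ j ∈ Finset.range n, w j ^ q) ∧
        Measure.map (fun ω => ∑ j ∈ Finset.range n, w j * A j ω) P = dens f := by
    intro n
    induction n with
    | zero => rintro ⟨j, hj, -⟩; exact absurd hj (Nat.not_lt_zero j)
    | succ n IH =>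
      rintro ⟨j, hj, hjpos⟩
      by_cases hwn : w n = 0
      · have hj' : j < n := by
          rcases Nat.lt_succ_iff_lt_or_eq.mp hj with h | h
          · exact h
          · exact absurd hjpos (by rw [h, hwn]; exact lt_irrefl 0)
        obtain ⟨f, hf, hfd⟩ := IH ⟨j, hj', hjpos⟩
        refine ⟨f, ?_, ?_⟩
        · have : ∑ j ∈ Finset.range (n+1), w j ^ q = ∑ j ∈ Finset.range n, w j ^ q := by
            rw [Finset.sum_range_succ, hwn, Real.zero_rpow hq.ne', add_zero]
          rwa [this]
        · have hfun : (fun ω => ∑ j ∈ Finset.range (n+1), w j * A j ω)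
              = (fun ω => ∑ j ∈ Finset.range n, w j * A j ω) := by
            funext ω
            rw [Finset.sum_range_succ, hwn, zero_mul, add_zero]
          rwa [hfun]
      · have hwn_pos : 0 < w n := (hw n).lt_of_ne (Ne.symm hwn)
        have hg_nice : Nice (fun r => (1/(w n)) * f0 (r/(w n))) q ((w n) ^ q * K) :=
          scale_nice hq hwn_pos hf0_nice
        have hgd : Measure.map (fun ω => w n * A n ω) P
            = dens (fun r => (1/(w n)) * f0 (r/(w n))) := by
          have hc : (fun ω => w n * A n ω) = ((fun x : ℝ => w n * x) ∘ A n) := rfl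
          rw [hc, ← Measure.map_map (measurable_const_mul (w n)) (hmeas n), hd0 n,
            dens_scale hf0_meas hwn_pos]
        by_cases hprev : ∃ j' < n, 0 < w j'
        · obtain ⟨f, hf, hfd⟩ := IH hprev
          have hXmeas : Measurable (fun ω => ∑ j ∈ Finset.range n, w j * A j ω) := by
            apply Finset.measurable_sum
            intro i _
            exact hmeas' i
          have hindepXY : IndepFun (fun ω => ∑ j ∈ Finset.range n, w j * A j ω)
              (fun ω => w n * A n ω) P := by
            have h2 := hiid.indepFun_sum_range_succ hmeas' n
            have hfun : (∑ j ∈ Finset.range n, fun ω => w j * A j ω)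
                = (fun ω => ∑ j ∈ Finset.range n, w j * A j ω) := by
              funext ω
              exact Finset.sum_apply ω (Finset.range n) _
            rwa [hfun] at h2
          obtain ⟨hnice, hmapd⟩ := conv_nice P hXmeas (hmeas' n) hindepXY hq hf hg_nice
            hfd hgd
          refine ⟨convd f (fun r => (1/(w n)) * f0 (r/(w n))), ?_, ?_⟩
          · have hconst : K * ∑ j ∈ Finset.range (n+1), w j ^ q
                = K * ∑ j ∈ Finset.range n, w j ^ q + (w n) ^ q * K := by
              rw [Finset.sum_range_succ]
              ring
            rwa [hconst]
          · have hfun : (fun ω => ∑ j ∈ Finset.range (n+1), w j * A j ω)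
                = (fun ω => (∑ j ∈ Finset.range n, w j * A j ω) + w n * A n ω) := by
              funext ω
              rw [Finset.sum_range_succ]
            rwa [hfun]
        · have hzero : ∀ j' < n, w j' = 0 := by
            intro j' hj'
            by_contra hne
            exact hprev ⟨j', hj', (hw j').lt_of_ne (Ne.symm hne)⟩
          refine ⟨(fun r => (1/(w n)) * f0 (r/(w n))), ?_, ?_⟩
          · have hconst : K * ∑ j ∈ Finset.range (n+1), w j ^ q = (w n) ^ q * K := by
              rw [Finset.sum_range_succ, Finset.sum_eq_zero, zero_add]
              · ring
              · intro i hi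
                rw [hzero i (Finset.mem_range.mp hi), Real.zero_rpow hq.ne']
            rwa [hconst]
          · have hfun : (fun ω => ∑ j ∈ Finset.range (n+1), w j * A j ω)
                = (fun ω => w n * A n ω) := by
              funext ω
              rw [Finset.sum_range_succ, Finset.sum_eq_zero, zero_add]
              intro i hi
              rw [hzero i (Finset.mem_range.mp hi), zero_mul]
            rwa [hfun]
  obtain ⟨f, hf, hfd⟩ := main m hw_ne
  refine ⟨f, hf.nn, hf.cont, ?_, hf.tail⟩
  intro B hB
  rw [hfd, dens_apply hf.integ hf.nn hB]
  congr 1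
  have hind : ∀ x, f x = Set.indicator (Set.Ioi 0) f x := by
    intro x
    by_cases hx : x ∈ Set.Ioi 0
    · rw [Set.indicator_of_mem hx]
    · rw [Set.indicator_of_notMem hx]
      exact hf.zero x (by simpa using hx)
  calc ∫ x in B, f x = ∫ x in B, Set.indicator (Set.Ioi 0) f x := by
        exact setIntegral_congr_fun hB fun x _ => hind x
    _ = ∫ x in B ∩ Set.Ioi 0, f x := setIntegral_indicator measurableSet_Ioi
end

section
/- Let (A_i)_{i≥1} be a sequence of independent, identically distributed nonnegative integrable real random variables whose common law has a density a bounded by K = sup_{x} a(x) < ∞. Let (w_i)_{i≥1} be nonnegative reals with Σ_i w_i < ∞ and w_j > 0 for at least one index j. Then the series S = Σ_{i≥1} w_i A_i converges almost surely and its law has a density bounded above by K / (sup_{i≥1} w_i). -/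
open MeasureTheory ProbabilityTheory Filter

open scoped ENNReal

lemma aux_argmax (w : ℕ → ℝ) (hsum : Summable w) (j : ℕ) (hj : 0 < w j) :
    ∃ i0, 0 < w i0 ∧ ∀ i, w i ≤ w i0 := by
  have h0 : Tendsto w atTop (nhds 0) := hsum.tendsto_atTop_zero
  have : ∀ᶠ i in atTop, w i < w j := h0.eventually (eventually_lt_nhds hj)
  obtain ⟨N, hN⟩ := eventually_atTop.mp this
  have hjN : j < N + 1 := by
    by_contra h
    exact absurd (hN j (by omega)) (lt_irrefl _)
  obtain ⟨i0, hi0mem, hi0⟩ :=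
    (Finset.range (N + 1)).exists_max_image w ⟨j, Finset.mem_range.mpr hjN⟩
  refine ⟨i0, lt_of_lt_of_le hj (hi0 j (Finset.mem_range.mpr hjN)), fun i => ?_⟩
  by_cases hi : i < N + 1
  · exact hi0 i (Finset.mem_range.mpr hi)
  · exact le_trans (hN i (by omega)).le (hi0 j (Finset.mem_range.mpr hjN))

lemma aux_affine_map (c : ℝ) (hc : c ≠ 0) (r : ℝ) :
    Measure.map (fun x : ℝ => c * x + r) volume = ENNReal.ofReal |c⁻¹| • volume := by
  have : (fun x : ℝ => c * x + r) = (fun y : ℝ => y + r) ∘ (fun x : ℝ => c * x) := rfl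
  rw [this, ← Measure.map_map (measurable_add_const r) (measurable_const_mul c),
    Real.map_volume_mul_left hc, Measure.map_smul,
    Measure.IsAddRightInvariant.map_add_right_eq_self (μ := (volume : Measure ℝ)) r]

lemma aux_cov {c : ℝ} (hc : 0 < c) (r : ℝ) (f : ℝ → ℝ≥0∞) (hf : Measurable f)
    (B : Set ℝ) (hB : MeasurableSet B) :
    ∫⁻ x in (fun x => c * x + r) ⁻¹' B, f x =
      ENNReal.ofReal c⁻¹ * ∫⁻ y in B, f ((y - r) / c) := by
  have hT : Measurable (fun x : ℝ => c * x + r) := (measurable_const_mul c).add_const r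
  have hg : Measurable (fun y : ℝ => f ((y - r) / c)) :=
    hf.comp ((measurable_id.sub_const r).div_const c)
  have h1 : ∫⁻ x in (fun x => c * x + r) ⁻¹' B, f x
      = ∫⁻ x, B.indicator (fun y => f ((y - r) / c)) (c * x + r) := by
    rw [← lintegral_indicator (hT hB) _]
    congr 1
    ext x
    rw [← Set.indicator_comp_right (fun x : ℝ => c * x + r)
      (s := B) (g := fun y => f ((y - r) / c))]
    congr 1
    ext z
    simp only [Function.comp_apply]
    congr 1
    field_simp
    ring
  rw [h1, ← lintegral_map (hg.indicator hB) hT, aux_affine_map c hc.ne' r,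
    lintegral_smul_measure, lintegral_indicator hB _, abs_of_pos (inv_pos.mpr hc), smul_eq_mul]

lemma aux_dens (μ : Measure ℝ) [IsProbabilityMeasure μ]
    (a : ℝ → ℝ) (ha_meas : Measurable a) (ha_nn : ∀ x, 0 ≤ a x)
    (K : ℝ) (ha_bdd : ∀ x, a x ≤ K)
    (hd : ∀ B : Set ℝ, MeasurableSet B → μ B = ENNReal.ofReal (∫ x in B, a x)) :
    ∀ B : Set ℝ, MeasurableSet B → μ B = ∫⁻ x in B, ENNReal.ofReal (a x) := by
  have hloc : ∀ n : ℕ, IntegrableOn a (Set.Icc (-(n:ℝ)) n) volume := by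
    intro n
    refine Measure.integrableOn_of_bounded (M := K) (by simp [measure_Icc_lt_top.ne])
      ha_meas.aestronglyMeasurable ?_
    filter_upwards with x
    rw [Real.norm_eq_abs, abs_of_nonneg (ha_nn x)]
    exact ha_bdd x
  have hIcc : ∀ n : ℕ, μ (Set.Icc (-(n:ℝ)) n)
      = ∫⁻ x in Set.Icc (-(n:ℝ)) n, ENNReal.ofReal (a x) := by
    intro n
    rw [hd _ measurableSet_Icc, ofReal_integral_eq_lintegral_ofReal (hloc n)
      (Filter.Eventually.of_forall fun x => ha_nn x)]
  have hmono : Monotone (fun n : ℕ => Set.Icc (-(n:ℝ)) n) := by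
    intro m n hmn
    exact Set.Icc_subset_Icc (by simp; exact_mod_cast hmn) (by exact_mod_cast hmn)
  have hunion : (⋃ n : ℕ, Set.Icc (-(n:ℝ)) n) = Set.univ := by
    ext x
    simp only [Set.mem_iUnion, Set.mem_univ, iff_true, Set.mem_Icc]
    obtain ⟨n, hn⟩ := exists_nat_ge |x|
    exact ⟨n, by constructor <;> [linarith [neg_abs_le x]; linarith [le_abs_self x]]⟩
  have htot : ∫⁻ x, ENNReal.ofReal (a x) ∂volume = 1 := by
    have h1 : Tendsto (fun n : ℕ => μ (Set.Icc (-(n:ℝ)) n)) atTop (nhds (μ Set.univ)) := by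
      rw [← hunion]
      exact tendsto_measure_iUnion_atTop hmono
    have h2 : Tendsto (fun n : ℕ => ∫⁻ x in Set.Icc (-(n:ℝ)) n, ENNReal.ofReal (a x)) atTop
        (nhds (∫⁻ x, ENNReal.ofReal (a x) ∂volume)) := by
      have := tendsto_measure_iUnion_atTop
        (μ := volume.withDensity (fun x => ENNReal.ofReal (a x))) hmono
      rw [hunion] at this
      rw [show (volume.withDensity fun x => ENNReal.ofReal (a x)) Set.univ
        = ∫⁻ x, ENNReal.ofReal (a x) ∂volume by
          rw [withDensity_apply _ MeasurableSet.univ, Measure.restrict_univ]] at this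
      refine this.congr fun n => ?_
      simp [Function.comp, withDensity_apply _ measurableSet_Icc]
    have := h2.congr' (Filter.Eventually.of_forall fun n => (hIcc n).symm)
    have h3 := tendsto_nhds_unique h1 this
    rw [measure_univ] at h3
    exact h3.symm
  have hint : Integrable a volume := by
    refine ⟨ha_meas.aestronglyMeasurable, ?_⟩
    rw [hasFiniteIntegral_iff_norm]
    have : ∀ x, ENNReal.ofReal ‖a x‖ = ENNReal.ofReal (a x) := fun x => by
      rw [Real.norm_eq_abs, abs_of_nonneg (ha_nn x)]
    simp only [this, htot]
    exact ENNReal.one_lt_top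
  intro B hB
  rw [hd B hB, ofReal_integral_eq_lintegral_ofReal (hint.integrableOn)
    (Filter.Eventually.of_forall fun x => ha_nn x)]

/-- For i.i.d. nonnegative integrable random variables whose common law has
a density bounded by `K`, and nonnegative summable weights with some `w_j > 0`, the series
`S = Σ w_i A_i` converges a.s. and its law has a density bounded by `K / (sup_i w_i)`. -/
theorem stmt_16 {Ω : Type*} [MeasurableSpace Ω] (P : Measure Ω) [IsProbabilityMeasure P]
    (A : ℕ → Ω → ℝ) (hmeas : ∀ i, Measurable (A i))
    (hindep : iIndepFun A P)
    (hident : ∀ i, Measure.map (A i) P = Measure.map (A 0) P)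
    (hnn : ∀ i, ∀ᵐ ω ∂P, 0 ≤ A i ω) (hint : ∀ i, Integrable (A i) P)
    (a : ℝ → ℝ) (ha_meas : Measurable a) (ha_nn : ∀ x, 0 ≤ a x)
    (K : ℝ) (ha_bdd : ∀ x, a x ≤ K)
    (ha_dens : ∀ B : Set ℝ, MeasurableSet B →
      Measure.map (A 0) P B = ENNReal.ofReal (∫ x in B, a x))
    (w : ℕ → ℝ) (hw : ∀ i, 0 ≤ w i) (hsum : Summable w) (j : ℕ) (hj : 0 < w j) :
    (∀ᵐ ω ∂P, Summable fun i => w i * A i ω) ∧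
    ∃ g : ℝ → ℝ, Measurable g ∧ (∀ x, 0 ≤ g x) ∧ (∀ x, g x ≤ K / ⨆ i, w i) ∧
      ∀ B : Set ℝ, MeasurableSet B →
        Measure.map (fun ω => ∑' i, w i * A i ω) P B = ENNReal.ofReal (∫ x in B, g x) := by
  classical
  obtain ⟨i0, hc0, hmax⟩ := aux_argmax w hsum j hj
  set c : ℝ := w i0 with hcdef
  have hbdd : BddAbove (Set.range w) := ⟨c, by rintro x ⟨i, rfl⟩; exact hmax i⟩
  have hsup : (⨆ i, w i) = c := le_antisymm (ciSup_le hmax) (le_ciSup hbdd i0)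
  have hK : 0 ≤ K := le_trans (ha_nn 0) (ha_bdd 0)
  -- a.e. nonnegativity of all coordinates
  have hgood : ∀ᵐ ω ∂P, ∀ i, 0 ≤ A i ω := ae_all_iff.mpr hnn
  -- finiteness of the ENNReal sum a.e.
  have hM : ∫⁻ ω, ENNReal.ofReal (A 0 ω) ∂P ≠ ⊤ := by
    refine ne_top_of_le_ne_top (hint 0).2.ne (lintegral_mono fun ω => ?_)
    rw [Real.enorm_eq_ofReal_abs]
    exact ENNReal.ofReal_le_ofReal (le_abs_self _)
  have hMi : ∀ i, ∫⁻ ω, ENNReal.ofReal (A i ω) ∂P = ∫⁻ ω, ENNReal.ofReal (A 0 ω) ∂P := by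
    intro i
    rw [← lintegral_map ENNReal.measurable_ofReal (hmeas i), hident i,
      lintegral_map ENNReal.measurable_ofReal (hmeas 0)]
  have hfin : ∀ᵐ ω ∂P, (∑' i, ENNReal.ofReal (w i * A i ω)) ≠ ⊤ := by
    have hlt : ∫⁻ ω, ∑' i, ENNReal.ofReal (w i * A i ω) ∂P ≠ ⊤ := by
      rw [lintegral_tsum fun i =>
        (((hmeas i).const_mul (w i)).ennreal_ofReal).aemeasurable]
      have heq : ∀ i, ∫⁻ ω, ENNReal.ofReal (w i * A i ω) ∂P
          = ENNReal.ofReal (w i) * ∫⁻ ω, ENNReal.ofReal (A 0 ω) ∂P := by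
        intro i
        rw [← hMi i, ← lintegral_const_mul _ ((hmeas i).ennreal_ofReal)]
        congr 1
        ext ω
        rw [← ENNReal.ofReal_mul (hw i)]
      simp only [heq]
      rw [ENNReal.tsum_mul_right, ← ENNReal.ofReal_tsum_of_nonneg hw hsum]
      exact ENNReal.mul_ne_top ENNReal.ofReal_ne_top hM
    have hmeas' : Measurable fun ω => ∑' i, ENNReal.ofReal (w i * A i ω) :=
      Measurable.ennreal_tsum fun i => ((hmeas i).const_mul (w i)).ennreal_ofReal
    exact (ae_lt_top hmeas' hlt).mono fun ω h => h.ne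
  -- a.e. summability
  have hsummable : ∀ᵐ ω ∂P, Summable fun i => w i * A i ω := by
    filter_upwards [hfin, hgood] with ω hf hg
    have := ENNReal.summable_toReal hf
    refine this.congr fun i => ?_
    exact ENNReal.toReal_ofReal (mul_nonneg (hw i) (hg i))
  refine ⟨hsummable, ?_⟩
  -- the remainder
  set X : Ω → ℝ := A i0 with hXdef
  set R : Ω → ℝ :=
    fun ω => (∑' i, if i = i0 then 0 else ENNReal.ofReal (w i * A i ω)).toReal with hRdef
  have hRmeas : Measurable R := by
    apply ENNReal.measurable_toReal.comp
    apply Measurable.ennreal_tsum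
    intro i
    by_cases hi : i = i0
    · simpa [hi] using measurable_const
    · simpa [hi] using ((hmeas i).const_mul (w i)).ennreal_ofReal
  -- a.e. decomposition
  have hSae : (fun ω => ∑' i, w i * A i ω) =ᵐ[P] fun ω => c * X ω + R ω := by
    filter_upwards [hfin, hgood, hsummable] with ω hf hg hsummω
    have hsplit : (∑' i, ENNReal.ofReal (w i * A i ω))
        = ENNReal.ofReal (w i0 * A i0 ω)
          + ∑' i, if i = i0 then 0 else ENNReal.ofReal (w i * A i ω) := by
      rw [ENNReal.tsum_eq_add_tsum_ite (f := fun i => ENNReal.ofReal (w i * A i ω)) i0]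
      congr 1
      exact tsum_congr fun b => by by_cases hb : b = i0 <;> simp [hb]
    have hne2 : (∑' i, if i = i0 then 0 else ENNReal.ofReal (w i * A i ω)) ≠ ⊤ := by
      intro h
      rw [hsplit, h, add_top] at hf
      exact hf rfl
    have h1 : ∑' i, w i * A i ω = (∑' i, ENNReal.ofReal (w i * A i ω)).toReal := by
      rw [← ENNReal.ofReal_tsum_of_nonneg (fun i => mul_nonneg (hw i) (hg i)) hsummω,
        ENNReal.toReal_ofReal (tsum_nonneg fun i => mul_nonneg (hw i) (hg i))]
    rw [h1, hsplit, ENNReal.toReal_add ENNReal.ofReal_ne_top hne2,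
      ENNReal.toReal_ofReal (mul_nonneg (hw i0) (hg i0))]
  -- independence of X and R
  have hXR : IndepFun X R P := by
    rw [IndepFun_iff_Indep]
    have hbi := ProbabilityTheory.indep_biSup_compl
      (fun i => (hmeas i).comap_le) hindep.iIndep ({i0} : Set ℕ)
    refine indep_of_indep_of_le_left (indep_of_indep_of_le_right hbi ?_) ?_
    · -- comap R ≤ sup over complement
      refine Measurable.comap_le ?_
      refine Measurable.comp (f := fun ω => ∑' i,
          if i = i0 then 0 else ENNReal.ofReal (w i * A i ω))
        ENNReal.measurable_toReal (Measurable.ennreal_tsum ?_)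
      intro i
      by_cases hi : i = i0
      · simpa [hi] using measurable_const
      · simp only [if_neg hi]
        have hAi : Measurable[⨆ i ∈ ({i0} : Set ℕ)ᶜ, MeasurableSpace.comap (A i) inferInstance]
            (A i) := by
          rw [measurable_iff_comap_le]
          exact le_iSup₂ (f := fun i (_ : i ∈ ({i0} : Set ℕ)ᶜ) =>
            MeasurableSpace.comap (A i) inferInstance) i hi
        exact Measurable.ennreal_ofReal (hAi.const_mul (w i))
    · exact le_iSup₂ (f := fun i (_ : i ∈ ({i0} : Set ℕ)) =>
        MeasurableSpace.comap (A i) inferInstance) i0 rfl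
  have hXmeas : Measurable X := hmeas i0
  have hprod : Measure.map (fun ω => (X ω, R ω)) P = (Measure.map X P).prod (Measure.map R P) :=
    (indepFun_iff_map_prod_eq_prod_map_map hXmeas.aemeasurable hRmeas.aemeasurable).mp hXR
  set ν : Measure ℝ := Measure.map R P with hνdef
  haveI : IsProbabilityMeasure ν := Measure.isProbabilityMeasure_map hRmeas.aemeasurable
  haveI : IsProbabilityMeasure (Measure.map (A 0) P) :=
    Measure.isProbabilityMeasure_map (hmeas 0).aemeasurable
  have hdens := aux_dens (Measure.map (A 0) P) a ha_meas ha_nn K ha_bdd ha_dens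
  -- define density
  set G : ℝ → ℝ≥0∞ :=
    fun y => ∫⁻ r, ENNReal.ofReal c⁻¹ * ENNReal.ofReal (a ((y - r) / c)) ∂ν with hGdef
  have hFmeas : Measurable (fun p : ℝ × ℝ =>
      ENNReal.ofReal c⁻¹ * ENNReal.ofReal (a ((p.1 - p.2) / c))) :=
    (measurable_const.mul (Measurable.ennreal_ofReal
      (ha_meas.comp ((measurable_fst.sub measurable_snd).div_const c))))
  have hGmeas : Measurable G := by
    apply Measurable.lintegral_prod_right
    exact hFmeas
  have hGle : ∀ y, G y ≤ ENNReal.ofReal (K / c) := by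
    intro y
    calc G y ≤ ∫⁻ _, ENNReal.ofReal c⁻¹ * ENNReal.ofReal K ∂ν := by
          refine lintegral_mono fun r => ?_
          exact mul_le_mul_right (ENNReal.ofReal_le_ofReal (ha_bdd _)) _
      _ = ENNReal.ofReal c⁻¹ * ENNReal.ofReal K := by
          rw [lintegral_const, measure_univ, mul_one]
      _ = ENNReal.ofReal (K / c) := by
          rw [← ENNReal.ofReal_mul (inv_nonneg.mpr hc0.le)]
          rw [div_eq_mul_inv, mul_comm]
  -- key identity
  have hkey : ∀ B : Set ℝ, MeasurableSet B →
      Measure.map (fun ω => ∑' i, w i * A i ω) P B = ∫⁻ y in B, G y := by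
    intro B hB
    have hpm : Measurable (fun p : ℝ × ℝ => c * p.1 + p.2) :=
      (measurable_fst.const_mul c).add measurable_snd
    rw [Measure.map_congr hSae,
      Measure.map_apply (show Measurable (fun ω => c * X ω + R ω) from (hXmeas.const_mul c).add hRmeas) hB]
    have hpre : (fun ω => c * X ω + R ω) ⁻¹' B
        = (fun ω => (X ω, R ω)) ⁻¹' ((fun p : ℝ × ℝ => c * p.1 + p.2) ⁻¹' B) := rfl
    rw [hpre, ← Measure.map_apply (hXmeas.prodMk hRmeas) (hpm hB), hprod,
      Measure.prod_apply_symm (hpm hB)]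
    have hslice : ∀ r : ℝ, (fun x => (x, r)) ⁻¹' ((fun p : ℝ × ℝ => c * p.1 + p.2) ⁻¹' B)
        = (fun x => c * x + r) ⁻¹' B := fun r => rfl
    have hXlaw : Measure.map X P = Measure.map (A 0) P := hident i0
    have hinner : ∀ r : ℝ, (Measure.map X P)
        ((fun x => (x, r)) ⁻¹' ((fun p : ℝ × ℝ => c * p.1 + p.2) ⁻¹' B))
        = ∫⁻ y in B, ENNReal.ofReal c⁻¹ * ENNReal.ofReal (a ((y - r) / c)) := by
      intro r
      have hTB : MeasurableSet ((fun x => c * x + r) ⁻¹' B) :=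
        ((measurable_const_mul c).add_const r) hB
      rw [hslice r, hXlaw, hdens _ hTB,
        aux_cov hc0 r (fun x => ENNReal.ofReal (a x)) ha_meas.ennreal_ofReal B hB]
      exact (lintegral_const_mul _
        ((ha_meas.comp ((measurable_id.sub_const r).div_const c)).ennreal_ofReal)).symm
    rw [lintegral_congr hinner]
    exact lintegral_lintegral_swap ((measurable_const.mul
      ((ha_meas.comp ((measurable_snd.sub measurable_fst).div_const c)).ennreal_ofReal)).aemeasurable)
  -- conclude
  have hSaem : AEMeasurable (fun ω => ∑' i, w i * A i ω) P :=
    ((hXmeas.const_mul c).add hRmeas).aemeasurable.congr hSae.symm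
  haveI : IsProbabilityMeasure (Measure.map (fun ω => ∑' i, w i * A i ω) P) :=
    Measure.isProbabilityMeasure_map hSaem
  refine ⟨fun y => (G y).toReal, hGmeas.ennreal_toReal, fun y => ENNReal.toReal_nonneg, ?_, ?_⟩
  · intro y
    rw [hsup]
    exact ENNReal.toReal_le_of_le_ofReal (div_nonneg hK hc0.le) (hGle y)
  · intro B hB
    have hle1 : ∫⁻ y in B, G y ≠ ⊤ := by
      rw [← hkey B hB]
      exact measure_ne_top _ _
    have hginta : Integrable (fun y => (G y).toReal) (volume.restrict B) :=
      integrable_toReal_of_lintegral_ne_top hGmeas.aemeasurable hle1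
    rw [hkey B hB, ofReal_integral_eq_lintegral_ofReal hginta
      (Filter.Eventually.of_forall fun y => ENNReal.toReal_nonneg)]
    exact (lintegral_congr fun y =>
      ENNReal.ofReal_toReal ((hGle y).trans_lt ENNReal.ofReal_lt_top).ne).symm
end
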